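/- arXiv:2006.07575 — 7 statements merged into one kernel-verified Lean document; each statement's English description precedes it below -/
import Mathlib

section
/- Let W be an n×n real symmetric matrix with nonnegative entries whose weighted graph is connected (for every pair of distinct indices i, j there is a path i = i_0, i_1, …, i_k = j with w_{i_m i_{m+1}} > 0 for each m) and whose degrees d_i = Σ_{j=1}^n w_{ij} are all positive. Partition the indices into labelled indices {1, …, n_l} with n_l ≥ 1 and unlabelled indices {n_l+1, …, n} with n_u = n − n_l ≥ 1, and fix a ∈ ℝ. Then for every nonzero u ∈ ℝ^{n_u}, u^T D_u^{1+2a} L^{(a)}_{uu} u = (1/2) Σ_{i,j unlabelled} w_{ij} (d_i^a u_i − d_j^a u_j)² + Σ_{i unlabelled} d_i^{2a} u_i² (Σ_{m labelled} w_{im}) > 0; consequently the symmetric matrix D_u^{1+2a} L^{(a)}_{uu} = D_u^{1+2a} − D_u^a W_{uu} D_u^a is positive definite and L^{(a)}_{uu} is invertible. -/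
open Matrix BigOperators

/-- The unlabelled indices `{nl+1, …, n}`. -/
abbrev Unlab (n nl : ℕ) := {i : Fin n // nl ≤ i.val}

/-- The labelled indices `{1, …, nl}`. -/
abbrev Lab (n nl : ℕ) := {i : Fin n // i.val < nl}

/-- Inclusion of the unlabelled indices. -/
def unl (n nl : ℕ) : Unlab n nl → Fin n := Subtype.val

/-- The degree of node `i` in the weighted graph `W`. -/
noncomputable def deg (n : ℕ) (W : Matrix (Fin n) (Fin n) ℝ) (i : Fin n) : ℝ := ∑ j, W i j

/-- The a-normalized Laplacian `L⁽ᵃ⁾ = I - D^{-1-a} W D^a`. -/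
noncomputable def La (n : ℕ) (W : Matrix (Fin n) (Fin n) ℝ) (a : ℝ) :
    Matrix (Fin n) (Fin n) ℝ :=
  1 - Matrix.diagonal (fun i => deg n W i ^ (-1 - a)) * W *
    Matrix.diagonal (fun i => deg n W i ^ a)

lemma conn_aux (n nl : ℕ) (W : Matrix (Fin n) (Fin n) ℝ) (v : Fin n → ℝ)
    (hZ1 : ∀ i j : Fin n, nl ≤ i.val → nl ≤ j.val → 0 < W i j → v i = v j)
    (hZ2 : ∀ i m : Fin n, nl ≤ i.val → m.val < nl → 0 < W i m → v i = 0) :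
    ∀ k (p : ℕ → Fin n), nl ≤ (p 0).val → (p k).val < nl →
      (∀ m < k, 0 < W (p m) (p (m + 1))) → v (p 0) = 0 := by
  intro k
  induction k with
  | zero => intro p h0 hk _; omega
  | succ k ih =>
    intro p h0 hk hpos
    by_cases h1 : (p 1).val < nl
    · exact hZ2 (p 0) (p 1) h0 h1 (hpos 0 (Nat.succ_pos k))
    · push_neg at h1
      have h2 := ih (fun m => p (m + 1)) h1 hk (fun m hm => hpos (m + 1) (by omega))
      rw [hZ1 (p 0) (p 1) h0 h1 (hpos 0 (Nat.succ_pos k))]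
      exact h2

/-- positivity of the quadratic form `uᵀ D_u^{1+2a} L⁽ᵃ⁾_{uu} u`, positive
definiteness of `D_u^{1+2a} - D_u^a W_{uu} D_u^a`, and invertibility of `L⁽ᵃ⁾_{uu}`, for a
connected nonnegative symmetric similarity matrix with positive degrees. -/
theorem stmt0 (n nl : ℕ) (hnl : 1 ≤ nl) (hnu : nl < n)
    (W : Matrix (Fin n) (Fin n) ℝ) (hsym : W.IsSymm) (hnn : ∀ i j, 0 ≤ W i j)
    (hconn : ∀ i j : Fin n, i ≠ j → ∃ (k : ℕ) (p : ℕ → Fin n),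
      p 0 = i ∧ p k = j ∧ ∀ m < k, 0 < W (p m) (p (m + 1)))
    (hdpos : ∀ i, 0 < deg n W i) (a : ℝ) :
    (∀ u : Unlab n nl → ℝ, u ≠ 0 →
      u ⬝ᵥ ((Matrix.diagonal (fun i : Unlab n nl => deg n W i.1 ^ (1 + 2 * a)) *
          (La n W a).submatrix (unl n nl) (unl n nl)) *ᵥ u)
        = (1 / 2) * (∑ i : Unlab n nl, ∑ j : Unlab n nl,
            W i.1 j.1 * (deg n W i.1 ^ a * u i - deg n W j.1 ^ a * u j) ^ 2)
          + ∑ i : Unlab n nl,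
              deg n W i.1 ^ (2 * a) * u i ^ 2 * ∑ m : Lab n nl, W i.1 m.1 ∧
      0 < u ⬝ᵥ ((Matrix.diagonal (fun i : Unlab n nl => deg n W i.1 ^ (1 + 2 * a)) *
          (La n W a).submatrix (unl n nl) (unl n nl)) *ᵥ u)) ∧
    (Matrix.diagonal (fun i : Unlab n nl => deg n W i.1 ^ (1 + 2 * a)) -
      Matrix.diagonal (fun i : Unlab n nl => deg n W i.1 ^ a) *
        W.submatrix (unl n nl) (unl n nl) *
      Matrix.diagonal (fun i : Unlab n nl => deg n W i.1 ^ a)).PosDef ∧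
    IsUnit ((La n W a).submatrix (unl n nl) (unl n nl)) := by
  have hrpos : ∀ (i : Fin n) (b : ℝ), 0 < deg n W i ^ b :=
    fun i b => Real.rpow_pos_of_pos (hdpos i) b
  have key : ∀ i : Fin n, deg n W i ^ (1 + 2 * a) * deg n W i ^ (-1 - a) = deg n W i ^ a :=
    fun i => by rw [← Real.rpow_add (hdpos i)]; ring_nf
  have h2a : ∀ i : Fin n, deg n W i ^ (2 * a) = deg n W i ^ a * deg n W i ^ a :=
    fun i => by rw [← Real.rpow_add (hdpos i)]; ring_nf
  have h12a : ∀ i : Fin n,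
      deg n W i ^ (1 + 2 * a) = deg n W i * (deg n W i ^ a * deg n W i ^ a) := fun i => by
    rw [← h2a, Real.rpow_add (hdpos i), Real.rpow_one]
  -- the matrix identity
  have hM : Matrix.diagonal (fun i : Unlab n nl => deg n W i.1 ^ (1 + 2 * a)) *
        (La n W a).submatrix (unl n nl) (unl n nl)
      = Matrix.diagonal (fun i : Unlab n nl => deg n W i.1 ^ (1 + 2 * a)) -
        Matrix.diagonal (fun i : Unlab n nl => deg n W i.1 ^ a) *
          W.submatrix (unl n nl) (unl n nl) *
        Matrix.diagonal (fun i : Unlab n nl => deg n W i.1 ^ a) := by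
    ext i j
    rw [Matrix.diagonal_mul, Matrix.sub_apply, Matrix.mul_diagonal, Matrix.diagonal_mul]
    simp only [La, Matrix.submatrix_apply, Matrix.sub_apply, Matrix.mul_diagonal,
      Matrix.diagonal_mul, Matrix.one_apply, Matrix.diagonal_apply, unl]
    rcases eq_or_ne i j with rfl | hij
    · simp only [if_pos rfl, if_true]
      linear_combination (-(W i.1 i.1 * deg n W i.1 ^ a)) * key i.1
    · have hij' : (i : Fin n) ≠ (j : Fin n) := fun h => hij (Subtype.ext h)
      simp only [if_neg hij, if_neg hij']
      linear_combination (-(W i.1 j.1 * deg n W j.1 ^ a)) * key i.1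
  -- degree splitting
  have hsplit : ∀ i : Fin n,
      (∑ j : Unlab n nl, W i j.1) + (∑ m : Lab n nl, W i m.1) = deg n W i := by
    intro i
    rw [deg, ← Fintype.sum_subtype_add_sum_subtype (fun x : Fin n => nl ≤ x.val)
      (fun j => W i j)]
    congr 1
    exact Fintype.sum_equiv (Equiv.subtypeEquivRight (fun x => by omega)) _ _ (fun x => rfl)
  -- the quadratic form identity
  have hquad : ∀ u : Unlab n nl → ℝ,
      u ⬝ᵥ ((Matrix.diagonal (fun i : Unlab n nl => deg n W i.1 ^ (1 + 2 * a)) *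
          (La n W a).submatrix (unl n nl) (unl n nl)) *ᵥ u)
        = (1 / 2) * (∑ i : Unlab n nl, ∑ j : Unlab n nl,
            W i.1 j.1 * (deg n W i.1 ^ a * u i - deg n W j.1 ^ a * u j) ^ 2)
          + ∑ i : Unlab n nl,
              deg n W i.1 ^ (2 * a) * u i ^ 2 * ∑ m : Lab n nl, W i.1 m.1 := by
    intro u
    rw [hM]
    set v : Unlab n nl → ℝ := fun i => deg n W i.1 ^ a * u i with hv
    have hfold : ∀ i : Unlab n nl, deg n W i.1 ^ a * u i = v i := fun i => rfl
    have step1 : u ⬝ᵥ ((Matrix.diagonal (fun i : Unlab n nl => deg n W i.1 ^ (1 + 2 * a)) -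
        Matrix.diagonal (fun i : Unlab n nl => deg n W i.1 ^ a) *
          W.submatrix (unl n nl) (unl n nl) *
        Matrix.diagonal (fun i : Unlab n nl => deg n W i.1 ^ a)) *ᵥ u)
        = (∑ i : Unlab n nl, deg n W i.1 ^ (1 + 2 * a) * u i ^ 2)
          - ∑ i : Unlab n nl, ∑ j : Unlab n nl, W i.1 j.1 * (v i * v j) := by
      simp only [dotProduct, Matrix.mulVec, dotProduct, Matrix.sub_apply,
        Matrix.mul_diagonal, Matrix.diagonal_mul, Matrix.diagonal_apply,
        Matrix.submatrix_apply, unl]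
      rw [← Finset.sum_sub_distrib]
      refine Finset.sum_congr rfl fun i _ => ?_
      have hterm : ∀ j : Unlab n nl,
          u i * (((if i = j then deg n W i.1 ^ (1 + 2 * a) else 0)
            - deg n W i.1 ^ a * W i.1 j.1 * deg n W j.1 ^ a) * u j)
          = (if i = j then deg n W i.1 ^ (1 + 2 * a) * (u i * u j) else 0)
            - W i.1 j.1 * (v i * v j) := by
        intro j
        rcases eq_or_ne i j with rfl | hij
        · simp only [eq_self_iff_true, if_true, hv]; ring
        · simp only [if_neg hij, hv]; ring
      rw [Finset.mul_sum]
      simp only [hterm]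
      rw [Finset.sum_sub_distrib, Finset.sum_ite_eq Finset.univ i
        (fun j => deg n W i.1 ^ (1 + 2 * a) * (u i * u j)), if_pos (Finset.mem_univ i)]
      simp only [hv]
      ring_nf
      congr 1
      exact Finset.sum_congr rfl fun j _ => by ring
    have step2 : (∑ i : Unlab n nl, deg n W i.1 ^ (1 + 2 * a) * u i ^ 2)
        = (∑ i : Unlab n nl, ∑ j : Unlab n nl, W i.1 j.1 * v i ^ 2)
          + ∑ i : Unlab n nl,
              deg n W i.1 ^ (2 * a) * u i ^ 2 * ∑ m : Lab n nl, W i.1 m.1 := by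
      rw [← Finset.sum_add_distrib]
      refine Finset.sum_congr rfl fun i _ => ?_
      have hvsq : v i ^ 2 = deg n W i.1 ^ a * deg n W i.1 ^ a * u i ^ 2 := by
        rw [hv]; ring
      rw [hvsq, h2a i.1, h12a i.1, ← Finset.sum_mul]
      linear_combination
        (-(deg n W i.1 ^ a * deg n W i.1 ^ a * u i ^ 2)) * hsplit i.1
    have hswap : (∑ i : Unlab n nl, ∑ j : Unlab n nl, W i.1 j.1 * v j ^ 2)
        = ∑ i : Unlab n nl, ∑ j : Unlab n nl, W i.1 j.1 * v i ^ 2 := by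
      rw [Finset.sum_comm]
      exact Finset.sum_congr rfl fun j _ => Finset.sum_congr rfl fun i _ => by
        rw [hsym.apply]
    have step3 : (∑ i : Unlab n nl, ∑ j : Unlab n nl, W i.1 j.1 * (v i - v j) ^ 2)
        = 2 * ((∑ i : Unlab n nl, ∑ j : Unlab n nl, W i.1 j.1 * v i ^ 2)
          - ∑ i : Unlab n nl, ∑ j : Unlab n nl, W i.1 j.1 * (v i * v j)) := by
      calc (∑ i : Unlab n nl, ∑ j : Unlab n nl, W i.1 j.1 * (v i - v j) ^ 2)
          = ∑ i : Unlab n nl, ∑ j : Unlab n nl,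
              (W i.1 j.1 * v i ^ 2 - 2 * (W i.1 j.1 * (v i * v j)) + W i.1 j.1 * v j ^ 2) :=
            Finset.sum_congr rfl fun i _ => Finset.sum_congr rfl fun j _ => by ring
        _ = (∑ i : Unlab n nl, ∑ j : Unlab n nl, W i.1 j.1 * v i ^ 2)
            - 2 * (∑ i : Unlab n nl, ∑ j : Unlab n nl, W i.1 j.1 * (v i * v j))
            + ∑ i : Unlab n nl, ∑ j : Unlab n nl, W i.1 j.1 * v j ^ 2 := by
            simp_rw [Finset.sum_add_distrib, Finset.sum_sub_distrib, ← Finset.mul_sum]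
        _ = _ := by rw [hswap]; ring
    simp only [hfold]
    rw [step1, step2, step3]
    ring
  -- strict positivity of the RHS
  have hpos : ∀ u : Unlab n nl → ℝ, u ≠ 0 →
      0 < (1 / 2) * (∑ i : Unlab n nl, ∑ j : Unlab n nl,
            W i.1 j.1 * (deg n W i.1 ^ a * u i - deg n W j.1 ^ a * u j) ^ 2)
          + ∑ i : Unlab n nl,
              deg n W i.1 ^ (2 * a) * u i ^ 2 * ∑ m : Lab n nl, W i.1 m.1 := by
    intro u hu
    have hS1 : 0 ≤ ∑ i : Unlab n nl, ∑ j : Unlab n nl,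
        W i.1 j.1 * (deg n W i.1 ^ a * u i - deg n W j.1 ^ a * u j) ^ 2 :=
      Finset.sum_nonneg fun i _ => Finset.sum_nonneg fun j _ =>
        mul_nonneg (hnn _ _) (sq_nonneg _)
    have hS2 : 0 ≤ ∑ i : Unlab n nl,
        deg n W i.1 ^ (2 * a) * u i ^ 2 * ∑ m : Lab n nl, W i.1 m.1 :=
      Finset.sum_nonneg fun i _ => mul_nonneg (mul_nonneg (le_of_lt (hrpos _ _))
        (sq_nonneg _)) (Finset.sum_nonneg fun m _ => hnn _ _)
    by_contra hle
    push_neg at hle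
    have hQ1 : (∑ i : Unlab n nl, ∑ j : Unlab n nl,
        W i.1 j.1 * (deg n W i.1 ^ a * u i - deg n W j.1 ^ a * u j) ^ 2) = 0 := by linarith
    have hQ2 : (∑ i : Unlab n nl,
        deg n W i.1 ^ (2 * a) * u i ^ 2 * ∑ m : Lab n nl, W i.1 m.1) = 0 := by linarith
    have h1 : ∀ i j : Unlab n nl,
        W i.1 j.1 * (deg n W i.1 ^ a * u i - deg n W j.1 ^ a * u j) ^ 2 = 0 := by
      intro i j
      have h1a := (Finset.sum_eq_zero_iff_of_nonneg (fun i _ => Finset.sum_nonneg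
        fun j _ => mul_nonneg (hnn _ _) (sq_nonneg _))).mp hQ1 i (Finset.mem_univ i)
      exact (Finset.sum_eq_zero_iff_of_nonneg (fun j _ =>
        mul_nonneg (hnn _ _) (sq_nonneg _))).mp h1a j (Finset.mem_univ j)
    have h2 : ∀ i : Unlab n nl,
        deg n W i.1 ^ (2 * a) * u i ^ 2 * ∑ m : Lab n nl, W i.1 m.1 = 0 := fun i =>
      (Finset.sum_eq_zero_iff_of_nonneg (fun i _ => mul_nonneg (mul_nonneg
        (le_of_lt (hrpos _ _)) (sq_nonneg _)) (Finset.sum_nonneg fun m _ => hnn _ _))).mp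
        hQ2 i (Finset.mem_univ i)
    -- extended vector on all of Fin n
    set vext : Fin n → ℝ :=
      fun i => if h : nl ≤ i.val then deg n W i ^ a * u ⟨i, h⟩ else 0 with hvext
    have hZ1 : ∀ i j : Fin n, nl ≤ i.val → nl ≤ j.val → 0 < W i j → vext i = vext j := by
      intro i j hi hj hw
      have := h1 ⟨i, hi⟩ ⟨j, hj⟩
      have hsq : (deg n W i ^ a * u ⟨i, hi⟩ - deg n W j ^ a * u ⟨j, hj⟩) ^ 2 = 0 := by
        rcases mul_eq_zero.mp this with h | h
        · exact absurd h (ne_of_gt hw)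
        · exact h
      have hdiff := sub_eq_zero.mp (sq_eq_zero_iff.mp hsq)
      simp only [hvext, dif_pos hi, dif_pos hj]
      exact hdiff
    have hZ2 : ∀ i m : Fin n, nl ≤ i.val → m.val < nl → 0 < W i m → vext i = 0 := by
      intro i m hi hm hw
      have hSpos : 0 < ∑ m' : Lab n nl, W i m'.1 := by
        have hle := Finset.single_le_sum (f := fun m' : Lab n nl => W i m'.1)
          (fun m' _ => hnn _ _) (Finset.mem_univ ⟨m, hm⟩)
        exact lt_of_lt_of_le hw hle
      have := h2 ⟨i, hi⟩
      have hu0 : u ⟨i, hi⟩ = 0 := by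
        have hne : (∑ m' : Lab n nl, W i m'.1) ≠ 0 := ne_of_gt hSpos
        have hdd : deg n W i ^ (2 * a) ≠ 0 := ne_of_gt (hrpos i (2 * a))
        have : deg n W i ^ (2 * a) * u ⟨i, hi⟩ ^ 2 = 0 := by
          rcases mul_eq_zero.mp this with h | h
          · exact h
          · exact absurd h hne
        rcases mul_eq_zero.mp this with h | h
        · exact absurd h hdd
        · exact sq_eq_zero_iff.mp h
      simp only [hvext, dif_pos hi, hu0, mul_zero]
    obtain ⟨i0, hi0⟩ := Function.ne_iff.mp hu
    have hm0 : (0 : ℕ) < nl := hnl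
    set m0 : Fin n := ⟨0, by omega⟩ with hm0def
    have hne : (i0.1 : Fin n) ≠ m0 := by
      intro h
      have := i0.2
      rw [h] at this
      simp [hm0def] at this
      omega
    obtain ⟨k, p, hp0, hpk, hppos⟩ := hconn i0.1 m0 hne
    have hzero := conn_aux n nl W vext hZ1 hZ2 k p
      (by rw [hp0]; exact i0.2) (by rw [hpk]; show (0:ℕ) < nl; exact hm0) hppos
    rw [hp0] at hzero
    have : deg n W i0.1 ^ a * u i0 = 0 := by
      have := hzero
      simp only [hvext, dif_pos i0.2] at this
      simpa using this
    rcases mul_eq_zero.mp this with h | h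
    · exact absurd h (ne_of_gt (hrpos _ _))
    · simp only [Pi.zero_apply] at hi0
      exact hi0 h
  -- assemble
  have hPD : (Matrix.diagonal (fun i : Unlab n nl => deg n W i.1 ^ (1 + 2 * a)) -
      Matrix.diagonal (fun i : Unlab n nl => deg n W i.1 ^ a) *
        W.submatrix (unl n nl) (unl n nl) *
      Matrix.diagonal (fun i : Unlab n nl => deg n W i.1 ^ a)).PosDef := by
    rw [Matrix.posDef_iff_dotProduct_mulVec]
    constructor
    · -- Hermitian
      rw [Matrix.IsHermitian]
      ext i j
      simp only [Matrix.conjTranspose_apply, Matrix.sub_apply, Matrix.mul_diagonal,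
        Matrix.diagonal_mul, Matrix.diagonal_apply, Matrix.submatrix_apply, unl,
        star_trivial]
      rcases eq_or_ne i j with rfl | hij
      · ring
      · have hij' : (j : Fin n) ≠ (i : Fin n) := fun h => hij (Subtype.ext h).symm
        rw [if_neg (Ne.symm hij), if_neg hij, hsym.apply]
        ring
    · intro x hx
      rw [star_trivial, ← hM]
      rw [hquad x]
      exact hpos x hx
  refine ⟨fun u hu => ⟨hquad u, ?_⟩, hPD, ?_⟩
  · rw [hquad u]; exact hpos u hu
  · -- invertibility of La_uu
    have hdetM : ((Matrix.diagonal (fun i : Unlab n nl => deg n W i.1 ^ (1 + 2 * a)) *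
        (La n W a).submatrix (unl n nl) (unl n nl))).det ≠ 0 := by
      rw [hM]
      exact ne_of_gt hPD.det_pos
    rw [Matrix.det_mul, Matrix.det_diagonal] at hdetM
    have hdetL : ((La n W a).submatrix (unl n nl) (unl n nl)).det ≠ 0 :=
      fun h => hdetM (by rw [h, mul_zero])
    exact (Matrix.isUnit_iff_isUnit_det _).mpr (isUnit_iff_ne_zero.mpr hdetL)
end

section
/- Let Ŵ be an n×n real symmetric matrix partitioned into blocks Ŵ = [[Ŵ_{ll}, Ŵ_{lu}], [Ŵ_{ul}, Ŵ_{uu}]] according to a split n = n_l + n_u, fix f_l ∈ ℝ^{n_l}, let α > λ_max(Ŵ_{uu}), and set f* = (α I_{n_u} − Ŵ_{uu})^{−1} Ŵ_{ul} f_l. Then f* uniquely maximizes f_u ↦ [f_l; f_u]^T Ŵ [f_l; f_u] over the sphere {f_u ∈ ℝ^{n_u} : ‖f_u‖ = ‖f*‖}; that is, for every f_u with ‖f_u‖ = ‖f*‖ and f_u ≠ f*, [f_l; f_u]^T Ŵ [f_l; f_u] < [f_l; f*]^T Ŵ [f_l; f*]. -/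
open Matrix BigOperators

lemma conj_posDef {n : ℕ} {U D : Matrix (Fin n) (Fin n) ℝ}
    (hU : U ∈ Matrix.unitaryGroup (Fin n) ℝ) (hD : D.PosDef) :
    (U * D * star U).PosDef := by
  refine Matrix.posDef_iff_dotProduct_mulVec.mpr ⟨?_, ?_⟩
  · show _ = _
    rw [Matrix.star_eq_conjTranspose, Matrix.conjTranspose_mul, Matrix.conjTranspose_mul,
      Matrix.conjTranspose_conjTranspose, hD.1.eq, ← Matrix.mul_assoc]
  · intro x hx
    have hU1 : U * star U = 1 := Matrix.mem_unitaryGroup_iff.mp hU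
    have hy : star U *ᵥ x ≠ 0 := by
      intro h
      apply hx
      have h2 : (U * star U) *ᵥ x = U *ᵥ (star U *ᵥ x) := (Matrix.mulVec_mulVec _ _ _).symm
      rw [hU1, Matrix.one_mulVec] at h2
      rw [h2, h, Matrix.mulVec_zero]
    have hpos := hD.dotProduct_mulVec_pos hy
    have hcalc : star (star U *ᵥ x) ⬝ᵥ D *ᵥ (star U *ᵥ x) = star x ⬝ᵥ (U * D * star U) *ᵥ x := by
      rw [Matrix.star_mulVec, Matrix.star_eq_conjTranspose, Matrix.conjTranspose_conjTranspose,
        Matrix.mulVec_mulVec, ← Matrix.dotProduct_mulVec, Matrix.mulVec_mulVec,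
        ← Matrix.mul_assoc]
    rwa [hcalc] at hpos

lemma shift_posDef {n : ℕ} {A : Matrix (Fin n) (Fin n) ℝ} (hA : A.IsHermitian) {α : ℝ}
    (hα : ∀ i, hA.eigenvalues i < α) :
    (α • (1 : Matrix (Fin n) (Fin n) ℝ) - A).PosDef := by
  have hD : (Matrix.diagonal (fun i => α - hA.eigenvalues i)).PosDef :=
    Matrix.posDef_diagonal_iff.mpr fun i => by linarith [hα i]
  have hU := (hA.eigenvectorUnitary).2
  have key : α • (1 : Matrix (Fin n) (Fin n) ℝ) - A =
      (hA.eigenvectorUnitary : Matrix (Fin n) (Fin n) ℝ) *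
        Matrix.diagonal (fun i => α - hA.eigenvalues i) *
        star (hA.eigenvectorUnitary : Matrix (Fin n) (Fin n) ℝ) := by
    set U : Matrix (Fin n) (Fin n) ℝ := (hA.eigenvectorUnitary : Matrix (Fin n) (Fin n) ℝ)
    have h1 : U * star U = 1 := Matrix.mem_unitaryGroup_iff.mp hU
    have hdiag : (Matrix.diagonal fun i => α - hA.eigenvalues i) =
        α • (1 : Matrix (Fin n) (Fin n) ℝ) - Matrix.diagonal (RCLike.ofReal ∘ hA.eigenvalues) := by
      ext i j
      by_cases h : i = j <;> simp [Matrix.diagonal_apply, h, Matrix.one_apply]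
    have hs := hA.spectral_theorem
    rw [Unitary.conjStarAlgAut_apply] at hs
    rw [hdiag, Matrix.mul_sub, Matrix.sub_mul, ← hs]
    congr 1
    rw [Matrix.mul_smul, Matrix.smul_mul, Matrix.mul_one, h1]
  rw [key]
  exact conj_posDef hU hD

/-- with `f* = (α I - Ŵ_{uu})⁻¹ Ŵ_{ul} f_l` for `α` above the largest
eigenvalue of `Ŵ_{uu}`, the vector `f*` is the unique maximizer of
`f_u ↦ [f_l; f_u]ᵀ Ŵ [f_l; f_u]` over the sphere `{f_u : ‖f_u‖ = ‖f*‖}`. -/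
theorem stmt5 (nl nu : ℕ) (What : Matrix (Fin nl ⊕ Fin nu) (Fin nl ⊕ Fin nu) ℝ)
    (hsym : What.IsSymm) (fl : Fin nl → ℝ) (α : ℝ)
    (hH : (What.toBlocks₂₂).IsHermitian)
    (hα : ∀ i, hH.eigenvalues i < α)
    (fstar : Fin nu → ℝ)
    (hfstar : fstar = (α • (1 : Matrix (Fin nu) (Fin nu) ℝ) - What.toBlocks₂₂)⁻¹ *ᵥ
      (What.toBlocks₂₁ *ᵥ fl)) :
    ∀ fu : Fin nu → ℝ, ∑ i, fu i ^ 2 = ∑ i, fstar i ^ 2 → fu ≠ fstar →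
      Sum.elim fl fu ⬝ᵥ (What *ᵥ Sum.elim fl fu) <
      Sum.elim fl fstar ⬝ᵥ (What *ᵥ Sum.elim fl fstar) := by
  intro fu hnorm hne
  classical
  set A := What.toBlocks₂₂ with hAdef
  set M : Matrix (Fin nu) (Fin nu) ℝ := α • 1 - A with hMdef
  have hMpd : M.PosDef := shift_posDef hH hα
  have hdet : M.det ≠ 0 := hMpd.det_pos.ne'
  have hb : M *ᵥ fstar = What.toBlocks₂₁ *ᵥ fl := by
    rw [hfstar, Matrix.mulVec_mulVec, Matrix.mul_nonsing_inv _ hdet.isUnit, Matrix.one_mulVec]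
  set d : Fin nu → ℝ := fstar - fu with hd
  have hdne : d ≠ 0 := sub_ne_zero.mpr (Ne.symm hne)
  have hpos0 := hMpd.dotProduct_mulVec_pos hdne
  have hstar : star d = d := by funext i; simp
  rw [hstar] at hpos0
  -- transpose of block
  have hAT : Aᵀ = A := by
    ext i j
    have := congrFun (congrFun hH.eq i) j
    simpa using this
  have hW12 : What.toBlocks₁₂ = (What.toBlocks₂₁)ᵀ := by
    ext i j
    have h := congrFun (congrFun hsym (Sum.inl i)) (Sum.inr j)
    simpa [Matrix.toBlocks₁₂, Matrix.toBlocks₂₁] using h.symm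
  have hAsym : ∀ x y : Fin nu → ℝ, x ⬝ᵥ (A *ᵥ y) = y ⬝ᵥ (A *ᵥ x) := by
    intro x y
    rw [Matrix.dotProduct_mulVec, ← Matrix.mulVec_transpose, hAT, dotProduct_comm]
  have hblock : ∀ v : Fin nu → ℝ,
      Sum.elim fl v ⬝ᵥ (What *ᵥ Sum.elim fl v) =
        fl ⬝ᵥ (What.toBlocks₁₁ *ᵥ fl) + 2 * (v ⬝ᵥ (What.toBlocks₂₁ *ᵥ fl)) + v ⬝ᵥ (A *ᵥ v) := by
    intro v
    conv_lhs => rw [← Matrix.fromBlocks_toBlocks What]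
    rw [Matrix.fromBlocks_mulVec, sumElim_dotProduct_sumElim,
      dotProduct_add, dotProduct_add]
    have hcross : fl ⬝ᵥ (What.toBlocks₁₂ *ᵥ v) = v ⬝ᵥ (What.toBlocks₂₁ *ᵥ fl) := by
      rw [hW12, Matrix.mulVec_transpose, Matrix.dotProduct_mulVec, dotProduct_comm]
    simp only [Sum.elim_comp_inl, Sum.elim_comp_inr] at hcross ⊢
    rw [hcross]
    ring
  have hMexp : ∀ x y : Fin nu → ℝ, x ⬝ᵥ (M *ᵥ y) = α * (x ⬝ᵥ y) - x ⬝ᵥ (A *ᵥ y) := by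
    intro x y
    rw [hMdef, Matrix.sub_mulVec, dotProduct_sub, Matrix.smul_mulVec,
      Matrix.one_mulVec, dotProduct_smul, smul_eq_mul]
  have e1 : fstar ⬝ᵥ (What.toBlocks₂₁ *ᵥ fl)
      = α * (fstar ⬝ᵥ fstar) - fstar ⬝ᵥ (A *ᵥ fstar) := by rw [← hb, hMexp]
  have e2 : fu ⬝ᵥ (What.toBlocks₂₁ *ᵥ fl)
      = α * (fu ⬝ᵥ fstar) - fu ⬝ᵥ (A *ᵥ fstar) := by rw [← hb, hMexp]
  have e3 : 0 < α * (d ⬝ᵥ d) - d ⬝ᵥ (A *ᵥ d) := by rw [← hMexp]; exact hpos0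
  have e4 : d ⬝ᵥ d = fstar ⬝ᵥ fstar - 2 * (fu ⬝ᵥ fstar) + fu ⬝ᵥ fu := by
    rw [hd, sub_dotProduct, dotProduct_sub, dotProduct_sub,
      dotProduct_comm fstar fu]
    ring
  have e5 : d ⬝ᵥ (A *ᵥ d) = fstar ⬝ᵥ (A *ᵥ fstar) - 2 * (fu ⬝ᵥ (A *ᵥ fstar)) + fu ⬝ᵥ (A *ᵥ fu) := by
    rw [hd, Matrix.mulVec_sub, sub_dotProduct, dotProduct_sub,
      dotProduct_sub, hAsym fstar fu]
    ring
  have hnn : fu ⬝ᵥ fu = fstar ⬝ᵥ fstar := by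
    simpa [dotProduct, pow_two] using hnorm
  rw [e4, e5, hnn] at e3
  rw [hblock fu, hblock fstar]
  nlinarith [e1, e2, e3]
end

section
/- Let p be a positive integer and C a real symmetric positive definite p×p matrix with largest eigenvalue λ_max(C). Then the function q(ξ) = (ξ²/p) · tr( ((I_p − ξ C)^{−1} C)² ) is positive and strictly increasing on the interval (0, 1/λ_max(C)). -/
open Matrix BigOperators

/-- The resolvent `(I_p - ξ C)⁻¹`. -/
noncomputable def resolv (p : ℕ) (C : Matrix (Fin p) (Fin p) ℝ) (ξ : ℝ) :
    Matrix (Fin p) (Fin p) ℝ :=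
  ((1 : Matrix (Fin p) (Fin p) ℝ) - ξ • C)⁻¹

/-- `θ(ξ) = ρ₁ ρ₂ ξ vᵀ (I - ξC)⁻¹ v`. -/
noncomputable def theta (p : ℕ) (C : Matrix (Fin p) (Fin p) ℝ) (v : Fin p → ℝ)
    (ρ1 ρ2 ξ : ℝ) : ℝ :=
  ρ1 * ρ2 * ξ * (v ⬝ᵥ (resolv p C ξ *ᵥ v))

/-- `q(ξ) = (ξ²/p) tr( ((I - ξC)⁻¹ C)² )`. -/
noncomputable def qfun (p : ℕ) (C : Matrix (Fin p) (Fin p) ℝ) (ξ : ℝ) : ℝ :=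
  ξ ^ 2 / p * Matrix.trace ((resolv p C ξ * C) ^ 2)

/-- `s(ξ) = ρ₁ ρ₂ ξ² vᵀ (I - ξC)⁻¹ C (I - ξC)⁻¹ v`. -/
noncomputable def sfun (p : ℕ) (C : Matrix (Fin p) (Fin p) ℝ) (v : Fin p → ℝ)
    (ρ1 ρ2 ξ : ℝ) : ℝ :=
  ρ1 * ρ2 * ξ ^ 2 * (v ⬝ᵥ ((resolv p C ξ * C * resolv p C ξ) *ᵥ v))

/-- `m(ξ) = 2 c_l θ(ξ) / (c_u (1 - θ(ξ)))`. -/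
noncomputable def mfun (p : ℕ) (C : Matrix (Fin p) (Fin p) ℝ) (v : Fin p → ℝ)
    (ρ1 ρ2 cl cu ξ : ℝ) : ℝ :=
  2 * cl * theta p C v ρ1 ρ2 ξ / (cu * (1 - theta p C v ρ1 ρ2 ξ))

/-- `σ²(ξ) = [ρ₁ρ₂ (2c_l + m(ξ)c_u)² s(ξ) + ρ₁ρ₂ (4c_l + m(ξ)²c_u) q(ξ)] / (c_u (c_u - q(ξ)))`. -/
noncomputable def sigma2 (p : ℕ) (C : Matrix (Fin p) (Fin p) ℝ) (v : Fin p → ℝ)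
    (ρ1 ρ2 cl cu ξ : ℝ) : ℝ :=
  (ρ1 * ρ2 * (2 * cl + mfun p C v ρ1 ρ2 cl cu ξ * cu) ^ 2 * sfun p C v ρ1 ρ2 ξ
    + ρ1 * ρ2 * (4 * cl + (mfun p C v ρ1 ρ2 cl cu ξ) ^ 2 * cu) * qfun p C ξ)
  / (cu * (cu - qfun p C ξ))


lemma qfun_eq_aux (p : ℕ) (C : Matrix (Fin p) (Fin p) ℝ) (hC : C.PosDef) (ξ : ℝ)
    (h : ∀ i, 1 - ξ * hC.1.eigenvalues i ≠ 0) :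
    qfun p C ξ = ξ ^ 2 / p *
      ∑ i, ((1 - ξ * hC.1.eigenvalues i)⁻¹ * hC.1.eigenvalues i) ^ 2 := by
  set U := (hC.1.eigenvectorUnitary : Matrix (Fin p) (Fin p) ℝ) with hUdef
  set μ := hC.1.eigenvalues with hμdef
  have hU1 : star U * U = 1 := Unitary.star_mul_self_of_mem hC.1.eigenvectorUnitary.2
  have hU2 : U * star U = 1 := Unitary.mul_star_self_of_mem hC.1.eigenvectorUnitary.2
  have hCd : C = U * diagonal μ * star U := by
    have := hC.1.spectral_theorem
    simpa using this
  have hconj : ∀ d e : Fin p → ℝ,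
      (U * diagonal d * star U) * (U * diagonal e * star U)
        = U * diagonal (fun i => d i * e i) * star U := by
    intro d e
    calc (U * diagonal d * star U) * (U * diagonal e * star U)
        = U * (diagonal d * (star U * U) * diagonal e) * star U := by
          simp only [Matrix.mul_assoc]
      _ = U * diagonal (fun i => d i * e i) * star U := by
          rw [hU1, Matrix.mul_one, diagonal_mul_diagonal, Matrix.mul_assoc]
  have key : ((1 : Matrix (Fin p) (Fin p) ℝ) - ξ • C)
      = U * diagonal (fun i => 1 - ξ * μ i) * star U := by
    have hd : diagonal (fun i => 1 - ξ * μ i)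
        = (1 : Matrix (Fin p) (Fin p) ℝ) - ξ • diagonal μ := by
      rw [← diagonal_one, ← diagonal_smul, ← diagonal_sub]
      rfl
    rw [hd, Matrix.mul_sub, Matrix.sub_mul, Matrix.mul_one, hU2, hCd]
    congr 1
    rw [Matrix.mul_smul, Matrix.smul_mul]
  have hres : resolv p C ξ = U * diagonal (fun i => (1 - ξ * μ i)⁻¹) * star U := by
    rw [resolv, key]
    apply Matrix.inv_eq_right_inv
    rw [hconj]
    have : (fun i => (1 - ξ * μ i) * (1 - ξ * μ i)⁻¹) = fun _ => (1:ℝ) := by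
      funext i; exact mul_inv_cancel₀ (h i)
    rw [this, diagonal_one, Matrix.mul_one, hU2]
  have hRC : resolv p C ξ * C = U * diagonal (fun i => (1 - ξ * μ i)⁻¹ * μ i) * star U := by
    rw [hres, hCd, hconj]
  have hsq : (resolv p C ξ * C) ^ 2
      = U * diagonal (fun i => ((1 - ξ * μ i)⁻¹ * μ i) ^ 2) * star U := by
    rw [sq, hRC, hconj]
    have heq : (fun i => ((1 - ξ * μ i)⁻¹ * μ i) * ((1 - ξ * μ i)⁻¹ * μ i))
        = fun i => ((1 - ξ * μ i)⁻¹ * μ i) ^ 2 := by funext i; ring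
    rw [heq]
  rw [qfun, hsq]
  congr 1
  rw [Matrix.trace_mul_cycle, hU1, Matrix.one_mul, trace_diagonal]

/-- `q(ξ) = (ξ²/p) tr(((I - ξC)⁻¹ C)²)` is positive and strictly increasing
on `(0, 1/λ_max(C))`, for `C` symmetric positive definite. -/
theorem stmt11 (p : ℕ) (hp : 0 < p) (C : Matrix (Fin p) (Fin p) ℝ) (hC : C.PosDef)
    (lmax : ℝ) (hlmax : IsGreatest (Set.range hC.1.eigenvalues) lmax) :
    (∀ ξ ∈ Set.Ioo (0 : ℝ) lmax⁻¹, 0 < qfun p C ξ) ∧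
    StrictMonoOn (qfun p C) (Set.Ioo (0 : ℝ) lmax⁻¹) := by
  have : Nonempty (Fin p) := ⟨⟨0, hp⟩⟩
  set μ := hC.1.eigenvalues with hμdef
  have hpos : ∀ i, 0 < μ i := fun i => hC.eigenvalues_pos i
  have hlb : ∀ i, μ i ≤ lmax := fun i => hlmax.2 ⟨i, rfl⟩
  have hlmaxpos : 0 < lmax :=
    lt_of_lt_of_le (hpos (Classical.arbitrary _)) (hlb (Classical.arbitrary _))
  have hp' : (0 : ℝ) < p := by exact_mod_cast hp
  have hden : ∀ ξ ∈ Set.Ioo (0:ℝ) lmax⁻¹, ∀ i, 0 < 1 - ξ * μ i := by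
    intro ξ hξ i
    have h1 : ξ * lmax < lmax⁻¹ * lmax := mul_lt_mul_of_pos_right hξ.2 hlmaxpos
    rw [inv_mul_cancel₀ hlmaxpos.ne'] at h1
    have h2 : ξ * μ i ≤ ξ * lmax := mul_le_mul_of_nonneg_left (hlb i) hξ.1.le
    linarith
  have hq : ∀ ξ ∈ Set.Ioo (0:ℝ) lmax⁻¹,
      qfun p C ξ = (∑ i, ξ^2 * ((1 - ξ * μ i)⁻¹ * μ i)^2) / p := by
    intro ξ hξ
    rw [qfun_eq_aux p C hC ξ (fun i => (hden ξ hξ i).ne'), ← Finset.mul_sum]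
    ring
  constructor
  · intro ξ hξ
    rw [hq ξ hξ]
    apply div_pos _ hp'
    apply Finset.sum_pos _ Finset.univ_nonempty
    intro i _
    exact mul_pos (pow_pos hξ.1 2)
      (pow_pos (mul_pos (inv_pos.2 (hden ξ hξ i)) (hpos i)) 2)
  · intro a ha b hb hab
    rw [hq a ha, hq b hb]
    gcongr ?_ / p
    apply Finset.sum_lt_sum_of_nonempty Finset.univ_nonempty
    intro i _
    have hda := hden a ha i
    have hdb := hden b hb i
    have e1 : ∀ ξ : ℝ, (1 - ξ * μ i) ≠ 0 → ξ^2 * ((1 - ξ * μ i)⁻¹ * μ i)^2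
        = (ξ * μ i / (1 - ξ * μ i))^2 := by
      intro ξ hne; field_simp
    rw [e1 a hda.ne', e1 b hdb.ne']
    apply pow_lt_pow_left₀ _ _ (two_ne_zero)
    · rw [div_lt_div_iff₀ hda hdb]
      nlinarith [mul_lt_mul_of_pos_right hab (hpos i), mul_pos ha.1 (hpos i), mul_pos hb.1 (hpos i)]
    · exact div_nonneg (mul_nonneg ha.1.le (hpos i).le) hda.le
end

section
/- Let p be a positive integer, C a real symmetric positive definite p×p matrix with largest eigenvalue λ_max(C), v ∈ ℝ^p a nonzero vector, and ρ_1, ρ_2 > 0. Then the function s(ξ) = ρ_1 ρ_2 ξ² v^T (I_p − ξ C)^{−1} C (I_p − ξ C)^{−1} v is positive and strictly increasing on the interval (0, 1/λ_max(C)). -/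
open Matrix BigOperators

/-- `s(ξ) = ρ₁ ρ₂ ξ² vᵀ (I - ξC)⁻¹ C (I - ξC)⁻¹ v` is positive and strictly
increasing on `(0, 1/λ_max(C))`, for `C` symmetric positive definite, `v ≠ 0`, `ρ₁, ρ₂ > 0`. -/
theorem stmt12 (p : ℕ) (hp : 0 < p) (C : Matrix (Fin p) (Fin p) ℝ) (hC : C.PosDef)
    (lmax : ℝ) (hlmax : IsGreatest (Set.range hC.1.eigenvalues) lmax)
    (v : Fin p → ℝ) (hv : v ≠ 0) (ρ1 ρ2 : ℝ) (hρ1 : 0 < ρ1) (hρ2 : 0 < ρ2) :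
    (∀ ξ ∈ Set.Ioo (0 : ℝ) lmax⁻¹, 0 < sfun p C v ρ1 ρ2 ξ) ∧
    StrictMonoOn (sfun p C v ρ1 ρ2) (Set.Ioo (0 : ℝ) lmax⁻¹) := by
  
  classical
  set U : Matrix (Fin p) (Fin p) ℝ := (hC.1.eigenvectorUnitary : Matrix (Fin p) (Fin p) ℝ)
    with hUdef
  set lam : Fin p → ℝ := hC.1.eigenvalues with hlamdef
  have hUU : U * star U = 1 := (Matrix.mem_unitaryGroup_iff).mp hC.1.eigenvectorUnitary.2
  have hUU' : star U * U = 1 := (Matrix.mem_unitaryGroup_iff').mp hC.1.eigenvectorUnitary.2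
  have hspec : C = U * Matrix.diagonal lam * star U := by
    have h := hC.1.spectral_theorem
    rw [Unitary.conjStarAlgAut_apply] at h
    convert h using 2
    all_goals rfl
  have hlampos : ∀ i, 0 < lam i := fun i => hC.eigenvalues_pos i
  have hlmaxpos : 0 < lmax := by
    obtain ⟨i, hi⟩ := hlmax.1
    exact hi ▸ hlampos i
  set w : Fin p → ℝ := star U *ᵥ v with hwdef
  have hw : ∃ i, w i ≠ 0 := by
    by_contra h
    push_neg at h
    have hw0 : w = 0 := funext h
    apply hv
    have : U *ᵥ w = v := by
      rw [hwdef, Matrix.mulVec_mulVec, hUU, Matrix.one_mulVec]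
    rw [← this, hw0, Matrix.mulVec_zero]
  -- key formula on the interval
  have key : ∀ ξ ∈ Set.Ioo (0 : ℝ) lmax⁻¹,
      sfun p C v ρ1 ρ2 ξ
        = ρ1 * ρ2 * ∑ i, lam i * w i ^ 2 * (ξ * (1 - ξ * lam i)⁻¹) ^ 2 := by
    intro ξ hξ
    have hd : ∀ i, 0 < 1 - ξ * lam i := by
      intro i
      have h1 : ξ * lam i ≤ ξ * lmax := by
        have := hlmax.2 ⟨i, rfl⟩
        nlinarith [hξ.1]
      have h2 : ξ * lmax < 1 := by
        have := hξ.2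
        calc ξ * lmax < lmax⁻¹ * lmax := by nlinarith
          _ = 1 := inv_mul_cancel₀ hlmaxpos.ne'
      linarith
    have hdiag : (1 : Matrix (Fin p) (Fin p) ℝ) - ξ • C
        = U * Matrix.diagonal (fun i => 1 - ξ * lam i) * star U := by
      have h1 : Matrix.diagonal (fun i => 1 - ξ * lam i)
          = (1 : Matrix (Fin p) (Fin p) ℝ) - ξ • Matrix.diagonal lam := by
        ext i j
        by_cases h : i = j <;>
          simp [Matrix.diagonal_apply, h, Matrix.one_apply]
      rw [h1, Matrix.mul_sub, Matrix.sub_mul, Matrix.mul_one, hUU, hspec,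
        Matrix.mul_smul, Matrix.smul_mul]
    have hconj : ∀ (A B : Matrix (Fin p) (Fin p) ℝ),
        (U * A * star U) * (U * B * star U) = U * (A * B) * star U := by
      intro A B
      simp only [Matrix.mul_assoc]
      rw [← Matrix.mul_assoc (star U) U (B * star U), hUU', Matrix.one_mul]
    have hR : resolv p C ξ = U * Matrix.diagonal (fun i => (1 - ξ * lam i)⁻¹) * star U := by
      apply Matrix.inv_eq_right_inv
      rw [hdiag, hconj, Matrix.diagonal_mul_diagonal,
        show (fun i => (1 - ξ * lam i) * (1 - ξ * lam i)⁻¹) = fun _ => (1:ℝ) from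
          funext fun i => mul_inv_cancel₀ (hd i).ne',
        Matrix.diagonal_one, Matrix.mul_one, hUU]
    have hRCR : resolv p C ξ * C * resolv p C ξ
        = U * Matrix.diagonal (fun i => (1 - ξ * lam i)⁻¹ * lam i * (1 - ξ * lam i)⁻¹)
          * star U := by
      rw [hR, hspec, hconj, hconj]
      congr 2
      rw [Matrix.diagonal_mul_diagonal, Matrix.diagonal_mul_diagonal]
    have hstar : star U = Uᵀ := by
      ext i j; simp [Matrix.star_apply]
    have hquad : v ⬝ᵥ ((resolv p C ξ * C * resolv p C ξ) *ᵥ v)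
        = ∑ i, (1 - ξ * lam i)⁻¹ * lam i * (1 - ξ * lam i)⁻¹ * w i ^ 2 := by
      rw [hRCR, ← Matrix.mulVec_mulVec, ← Matrix.mulVec_mulVec,
        Matrix.dotProduct_mulVec]
      have hvU : v ᵥ* U = w := by
        rw [hwdef, hstar]
        ext i
        simp [Matrix.vecMul, Matrix.mulVec, dotProduct, Matrix.transpose_apply, mul_comm]
      rw [hvU]
      have : star U *ᵥ v = w := rfl
      rw [this]
      simp only [dotProduct, Matrix.mulVec_diagonal]
      congr 1
      ext i
      ring
    rw [sfun, hquad, Finset.mul_sum, Finset.mul_sum]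
    congr 1
    ext i
    have hne : (1 - ξ * lam i) ≠ 0 := (hd i).ne'
    field_simp
  -- positivity
  have hpos : ∀ ξ ∈ Set.Ioo (0 : ℝ) lmax⁻¹, 0 < sfun p C v ρ1 ρ2 ξ := by
    intro ξ hξ
    rw [key ξ hξ]
    have hd : ∀ i, 0 < 1 - ξ * lam i := by
      intro i
      have h1 : ξ * lam i ≤ ξ * lmax := by
        have := hlmax.2 ⟨i, rfl⟩
        nlinarith [hξ.1]
      have h2 : ξ * lmax < 1 := by
        calc ξ * lmax < lmax⁻¹ * lmax := by nlinarith [hξ.2]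
          _ = 1 := inv_mul_cancel₀ hlmaxpos.ne'
      linarith
    apply mul_pos (mul_pos hρ1 hρ2)
    obtain ⟨i0, hi0⟩ := hw
    apply Finset.sum_pos'
    · intro i _
      have h0 := (hlampos i).le
      positivity
    · refine ⟨i0, Finset.mem_univ _, ?_⟩
      have h1 : 0 < lam i0 := hlampos i0
      have h3 : 0 < ξ * (1 - ξ * lam i0)⁻¹ := mul_pos hξ.1 (inv_pos.mpr (hd i0))
      positivity
  refine ⟨hpos, ?_⟩
  intro ξ1 hξ1 ξ2 hξ2 hlt
  rw [key ξ1 hξ1, key ξ2 hξ2]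
  have hd1 : ∀ i, 0 < 1 - ξ1 * lam i := by
    intro i
    have h1 : ξ1 * lam i ≤ ξ1 * lmax := by
      have := hlmax.2 ⟨i, rfl⟩; nlinarith [hξ1.1]
    have h2 : ξ1 * lmax < 1 := by
      calc ξ1 * lmax < lmax⁻¹ * lmax := by nlinarith [hξ1.2]
        _ = 1 := inv_mul_cancel₀ hlmaxpos.ne'
    linarith
  have hd2 : ∀ i, 0 < 1 - ξ2 * lam i := by
    intro i
    have h1 : ξ2 * lam i ≤ ξ2 * lmax := by
      have := hlmax.2 ⟨i, rfl⟩; nlinarith [hξ2.1]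
    have h2 : ξ2 * lmax < 1 := by
      calc ξ2 * lmax < lmax⁻¹ * lmax := by nlinarith [hξ2.2]
        _ = 1 := inv_mul_cancel₀ hlmaxpos.ne'
    linarith
  have hterm : ∀ i, ξ1 * (1 - ξ1 * lam i)⁻¹ < ξ2 * (1 - ξ2 * lam i)⁻¹ := by
    intro i
    rw [← div_eq_mul_inv, ← div_eq_mul_inv, div_lt_div_iff₀ (hd1 i) (hd2 i)]
    nlinarith [hlampos i]
  apply mul_lt_mul_of_pos_left _ (mul_pos hρ1 hρ2)
  obtain ⟨i0, hi0⟩ := hw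
  apply Finset.sum_lt_sum
  · intro i _
    have h1 : 0 ≤ ξ1 * (1 - ξ1 * lam i)⁻¹ := by
      have := inv_pos.mpr (hd1 i); nlinarith [hξ1.1]
    have := hterm i
    have hsq : (ξ1 * (1 - ξ1 * lam i)⁻¹) ^ 2 ≤ (ξ2 * (1 - ξ2 * lam i)⁻¹) ^ 2 := by
      nlinarith
    have hnn : 0 ≤ lam i * w i ^ 2 := by
      have := (hlampos i).le; positivity
    nlinarith
  · refine ⟨i0, Finset.mem_univ _, ?_⟩
    have h1 : 0 ≤ ξ1 * (1 - ξ1 * lam i0)⁻¹ := by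
      have := inv_pos.mpr (hd1 i0); nlinarith [hξ1.1]
    have h2 := hterm i0
    have hsq : (ξ1 * (1 - ξ1 * lam i0)⁻¹) ^ 2 < (ξ2 * (1 - ξ2 * lam i0)⁻¹) ^ 2 := by
      nlinarith
    have hpos' : 0 < lam i0 * w i0 ^ 2 := by
      have := hlampos i0
      have : w i0 ^ 2 > 0 := by positivity
      nlinarith [hlampos i0]
    nlinarith
end

section
/- Let p be a positive integer, C a real symmetric positive definite p×p matrix with largest eigenvalue λ_max(C), v ∈ ℝ^p nonzero, ρ_1, ρ_2 > 0, and c_l, c_u > 0. Define θ(ξ) = ρ_1 ρ_2 ξ v^T (I_p − ξ C)^{−1} v, q(ξ) = (ξ²/p) tr(((I_p − ξ C)^{−1} C)²), s(ξ) = ρ_1 ρ_2 ξ² v^T (I_p − ξ C)^{−1} C (I_p − ξ C)^{−1} v. Assume there exists ξ_m ∈ (0, 1/λ_max(C)) with θ(ξ_m) = 1, and let ξ_sup = ξ_m if q(ξ) < c_u for all ξ ∈ (0, ξ_m), and otherwise the unique ξ_{σ²} ∈ (0, ξ_m] with q(ξ_{σ²}) = c_u. On (0, ξ_sup) define m(ξ)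 = 2 c_l θ(ξ)/(c_u (1 − θ(ξ))) and σ²(ξ) = [ρ_1 ρ_2 (2 c_l + m(ξ) c_u)² s(ξ) + ρ_1 ρ_2 (4 c_l + m(ξ)² c_u) q(ξ)] / (c_u (c_u − q(ξ))). Then the function F(ξ) = ρ_1 ρ_2 m(ξ)² + σ²(ξ) is strictly increasing on (0, ξ_sup), F(ξ) → 0 as ξ → 0⁺, and F(ξ) → +∞ as ξ → ξ_sup⁻; consequently, for every e > 0 there is a unique ξ_e ∈ (0, ξ_sup) with ρ_1 ρ_2 m(ξ_e)² + σ²(ξ_e) = e². -/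
open Matrix BigOperators

section auxmat
variable {n : Type*} [Fintype n] [DecidableEq n]

lemma conj_mul_conj (U A B : Matrix n n ℝ) (hU : star U * U = 1) :
    (U * A * star U) * (U * B * star U) = U * (A * B) * star U := by
  simp only [Matrix.mul_assoc]
  rw [← Matrix.mul_assoc (star U) U (B * star U), hU, Matrix.one_mul]

lemma conj_inv_eq (U A B : Matrix n n ℝ) (hU : star U * U = 1) (hU' : U * star U = 1)
    (hAB : A * B = 1) : (U * A * star U)⁻¹ = U * B * star U := by
  refine Matrix.inv_eq_right_inv ?_
  rw [conj_mul_conj U A B hU, hAB, Matrix.mul_one, hU']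

lemma dot_conj_diag (U : Matrix n n ℝ) (d : n → ℝ) (v : n → ℝ) :
    v ⬝ᵥ ((U * diagonal d * star U) *ᵥ v)
      = ∑ i, d i * ((star U *ᵥ v) i)^2 := by
  rw [← Matrix.mulVec_mulVec, ← Matrix.mulVec_mulVec, Matrix.dotProduct_mulVec]
  have hvU : v ᵥ* U = star U *ᵥ v := by
    ext j
    simp [Matrix.vecMul, Matrix.mulVec, dotProduct, mul_comm]
  rw [hvU]
  simp [dotProduct, Matrix.mulVec_diagonal]
  refine Finset.sum_congr rfl fun i _ => by ring

lemma conj_sq (U A : Matrix n n ℝ) (hU : star U * U = 1) :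
    (U * A * star U) ^ 2 = U * (A * A) * star U := by
  rw [pow_two, conj_mul_conj U A A hU]

lemma trace_conj_diag (U : Matrix n n ℝ) (d : n → ℝ) (hU : star U * U = 1) :
    Matrix.trace (U * diagonal d * star U) = ∑ i, d i := by
  rw [Matrix.trace_mul_cycle, hU, Matrix.one_mul, Matrix.trace_diagonal]

end auxmat

section red
variable {p : ℕ} {C : Matrix (Fin p) (Fin p) ℝ} (hC : C.PosDef)

lemma spectral_real :
    C = (hC.1.eigenvectorUnitary : Matrix (Fin p) (Fin p) ℝ) * diagonal hC.1.eigenvalues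
      * star (hC.1.eigenvectorUnitary : Matrix (Fin p) (Fin p) ℝ) := by
  have h := hC.1.spectral_theorem
  simpa [RCLike.ofReal_real_eq_id, Function.comp] using h

lemma one_sub_smul_eq (ξ : ℝ) :
    (1 : Matrix (Fin p) (Fin p) ℝ) - ξ • C
      = (hC.1.eigenvectorUnitary : Matrix (Fin p) (Fin p) ℝ)
        * diagonal (fun i => 1 - ξ * hC.1.eigenvalues i)
        * star (hC.1.eigenvectorUnitary : Matrix (Fin p) (Fin p) ℝ) := by
  set U := (hC.1.eigenvectorUnitary : Matrix (Fin p) (Fin p) ℝ) with hUdef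
  have hU' : U * star U = 1 := Matrix.mem_unitaryGroup_iff.mp hC.1.eigenvectorUnitary.2
  have hdiag : diagonal (fun i => 1 - ξ * hC.1.eigenvalues i)
      = (1 : Matrix (Fin p) (Fin p) ℝ) - ξ • diagonal hC.1.eigenvalues := by
    ext i j
    by_cases h : i = j <;> simp [Matrix.diagonal, h, Matrix.one_apply]
  rw [hdiag, Matrix.mul_sub, Matrix.sub_mul, Matrix.mul_one, hU']
  rw [mul_smul_comm, smul_mul_assoc]
  rw [← spectral_real hC]

lemma resolv_eq (ξ : ℝ) (hd : ∀ i, 1 - ξ * hC.1.eigenvalues i ≠ 0) :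
    resolv p C ξ
      = (hC.1.eigenvectorUnitary : Matrix (Fin p) (Fin p) ℝ)
        * diagonal (fun i => (1 - ξ * hC.1.eigenvalues i)⁻¹)
        * star (hC.1.eigenvectorUnitary : Matrix (Fin p) (Fin p) ℝ) := by
  set U := (hC.1.eigenvectorUnitary : Matrix (Fin p) (Fin p) ℝ) with hUdef
  have hU : star U * U = 1 := Matrix.mem_unitaryGroup_iff'.mp hC.1.eigenvectorUnitary.2
  have hU' : U * star U = 1 := Matrix.mem_unitaryGroup_iff.mp hC.1.eigenvectorUnitary.2
  rw [resolv, one_sub_smul_eq hC ξ]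
  refine conj_inv_eq U _ _ hU hU' ?_
  rw [Matrix.diagonal_mul_diagonal]
  have : (fun i => (1 - ξ * hC.1.eigenvalues i) * (1 - ξ * hC.1.eigenvalues i)⁻¹)
      = fun _ => (1:ℝ) := funext fun i => mul_inv_cancel₀ (hd i)
  rw [this, Matrix.diagonal_one]


lemma theta_eq (v : Fin p → ℝ) (ρ1 ρ2 ξ : ℝ) (hd : ∀ i, 1 - ξ * hC.1.eigenvalues i ≠ 0) :
    theta p C v ρ1 ρ2 ξ = ρ1 * ρ2 *
      ∑ i, ((star (hC.1.eigenvectorUnitary : Matrix (Fin p) (Fin p) ℝ) *ᵥ v) i)^2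
        * (ξ / (1 - ξ * hC.1.eigenvalues i)) := by
  rw [theta, resolv_eq hC ξ hd, dot_conj_diag, Finset.mul_sum, Finset.mul_sum]
  exact Finset.sum_congr rfl fun i _ => by ring

lemma resolv_mul_C (ξ : ℝ) (hd : ∀ i, 1 - ξ * hC.1.eigenvalues i ≠ 0) :
    resolv p C ξ * C
      = (hC.1.eigenvectorUnitary : Matrix (Fin p) (Fin p) ℝ)
        * diagonal (fun i => (1 - ξ * hC.1.eigenvalues i)⁻¹ * hC.1.eigenvalues i)
        * star (hC.1.eigenvectorUnitary : Matrix (Fin p) (Fin p) ℝ) := by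
  have hU : star (hC.1.eigenvectorUnitary : Matrix (Fin p) (Fin p) ℝ)
      * (hC.1.eigenvectorUnitary : Matrix (Fin p) (Fin p) ℝ) = 1 :=
    Matrix.mem_unitaryGroup_iff'.mp hC.1.eigenvectorUnitary.2
  rw [← Matrix.diagonal_mul_diagonal, ← conj_mul_conj _ _ _ hU, ← spectral_real hC,
    ← resolv_eq hC ξ hd]

lemma qfun_eq (ξ : ℝ) (hd : ∀ i, 1 - ξ * hC.1.eigenvalues i ≠ 0) :
    qfun p C ξ = (p : ℝ)⁻¹ *
      ∑ i, (hC.1.eigenvalues i * (ξ / (1 - ξ * hC.1.eigenvalues i)))^2 := by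
  have hU : star (hC.1.eigenvectorUnitary : Matrix (Fin p) (Fin p) ℝ)
      * (hC.1.eigenvectorUnitary : Matrix (Fin p) (Fin p) ℝ) = 1 :=
    Matrix.mem_unitaryGroup_iff'.mp hC.1.eigenvectorUnitary.2
  rw [qfun, resolv_mul_C hC ξ hd, conj_sq _ _ hU,
    Matrix.diagonal_mul_diagonal, trace_conj_diag _ _ hU, Finset.mul_sum, Finset.mul_sum]
  exact Finset.sum_congr rfl fun i _ => by field_simp

lemma sfun_eq (v : Fin p → ℝ) (ρ1 ρ2 ξ : ℝ) (hd : ∀ i, 1 - ξ * hC.1.eigenvalues i ≠ 0) :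
    sfun p C v ρ1 ρ2 ξ = ρ1 * ρ2 *
      ∑ i, ((star (hC.1.eigenvectorUnitary : Matrix (Fin p) (Fin p) ℝ) *ᵥ v) i)^2
        * hC.1.eigenvalues i * (ξ / (1 - ξ * hC.1.eigenvalues i))^2 := by
  have hU : star (hC.1.eigenvectorUnitary : Matrix (Fin p) (Fin p) ℝ)
      * (hC.1.eigenvectorUnitary : Matrix (Fin p) (Fin p) ℝ) = 1 :=
    Matrix.mem_unitaryGroup_iff'.mp hC.1.eigenvectorUnitary.2
  rw [sfun, resolv_mul_C hC ξ hd, resolv_eq hC ξ hd, conj_mul_conj _ _ _ hU,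
    Matrix.diagonal_mul_diagonal, dot_conj_diag, Finset.mul_sum, Finset.mul_sum]
  exact Finset.sum_congr rfl fun i _ => by field_simp

end red


set_option maxHeartbeats 1000000 in
/-- with `ξ_m ∈ (0, 1/λ_max(C))` such that `θ(ξ_m) = 1`, and `ξ_sup = ξ_m`
if `q < c_u` on `(0, ξ_m)` and otherwise the point of `(0, ξ_m]` where `q = c_u`, the
function `F(ξ) = ρ₁ρ₂ m(ξ)² + σ²(ξ)` is strictly increasing on `(0, ξ_sup)`, tends to `0`
as `ξ → 0⁺` and to `+∞` as `ξ → ξ_sup⁻`; hence for every `e > 0` there is a unique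
`ξ_e ∈ (0, ξ_sup)` with `ρ₁ρ₂ m(ξ_e)² + σ²(ξ_e) = e²`. -/
theorem stmt15 (p : ℕ) (hp : 0 < p) (C : Matrix (Fin p) (Fin p) ℝ) (hC : C.PosDef)
    (lmax : ℝ) (hlmax : IsGreatest (Set.range hC.1.eigenvalues) lmax)
    (v : Fin p → ℝ) (hv : v ≠ 0) (ρ1 ρ2 cl cu : ℝ)
    (hρ1 : 0 < ρ1) (hρ2 : 0 < ρ2) (hcl : 0 < cl) (hcu : 0 < cu)
    (ξm : ℝ) (hξm : ξm ∈ Set.Ioo (0 : ℝ) lmax⁻¹) (hθξm : theta p C v ρ1 ρ2 ξm = 1)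
    (ξsup : ℝ)
    (hξsup : ((∀ ξ ∈ Set.Ioo (0 : ℝ) ξm, qfun p C ξ < cu) ∧ ξsup = ξm) ∨
      (¬ (∀ ξ ∈ Set.Ioo (0 : ℝ) ξm, qfun p C ξ < cu) ∧
        ξsup ∈ Set.Ioc (0 : ℝ) ξm ∧ qfun p C ξsup = cu)) :
    StrictMonoOn
      (fun ξ => ρ1 * ρ2 * (mfun p C v ρ1 ρ2 cl cu ξ) ^ 2 + sigma2 p C v ρ1 ρ2 cl cu ξ)
      (Set.Ioo (0 : ℝ) ξsup) ∧
    Filter.Tendsto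
      (fun ξ => ρ1 * ρ2 * (mfun p C v ρ1 ρ2 cl cu ξ) ^ 2 + sigma2 p C v ρ1 ρ2 cl cu ξ)
      (nhdsWithin 0 (Set.Ioi 0)) (nhds 0) ∧
    Filter.Tendsto
      (fun ξ => ρ1 * ρ2 * (mfun p C v ρ1 ρ2 cl cu ξ) ^ 2 + sigma2 p C v ρ1 ρ2 cl cu ξ)
      (nhdsWithin ξsup (Set.Iio ξsup)) Filter.atTop ∧
    ∀ e : ℝ, 0 < e → ∃! ξe : ℝ, ξe ∈ Set.Ioo (0 : ℝ) ξsup ∧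
      ρ1 * ρ2 * (mfun p C v ρ1 ρ2 cl cu ξe) ^ 2 + sigma2 p C v ρ1 ρ2 cl cu ξe = e ^ 2 := by
  classical
  have hnemp : Nonempty (Fin p) := ⟨⟨0, hp⟩⟩
  have hρ : (0:ℝ) < ρ1 * ρ2 := mul_pos hρ1 hρ2
  have hlam_pos : ∀ i, 0 < hC.1.eigenvalues i := fun i => hC.eigenvalues_pos i
  have hlmax_pos : 0 < lmax := by
    obtain ⟨i, hi⟩ := hlmax.1
    exact hi ▸ hlam_pos i
  have hlam_le : ∀ i, hC.1.eigenvalues i ≤ lmax := fun i => hlmax.2 ⟨i, rfl⟩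
  set D : Set ℝ := Set.Ico 0 lmax⁻¹ with hD_def
  have hdpos : ∀ ξ ∈ D, ∀ i, 0 < 1 - ξ * hC.1.eigenvalues i := by
    intro ξ hξ i
    have h1 : ξ * hC.1.eigenvalues i ≤ ξ * lmax := mul_le_mul_of_nonneg_left (hlam_le i) hξ.1
    have h2 : ξ * lmax < lmax⁻¹ * lmax := mul_lt_mul_of_pos_right hξ.2 hlmax_pos
    rw [inv_mul_cancel₀ (ne_of_gt hlmax_pos)] at h2
    linarith
  have hdne : ∀ ξ ∈ D, ∀ i, 1 - ξ * hC.1.eigenvalues i ≠ 0 :=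
    fun ξ hξ i => ne_of_gt (hdpos ξ hξ i)
  have h0D : (0:ℝ) ∈ D := ⟨le_refl 0, inv_pos.mpr hlmax_pos⟩
  have hξmD : ξm ∈ D := ⟨hξm.1.le, hξm.2⟩
  -- there is an index where the rotated vector is nonzero
  obtain ⟨i0, hi0⟩ : ∃ i,
      (star (hC.1.eigenvectorUnitary : Matrix (Fin p) (Fin p) ℝ) *ᵥ v) i ≠ 0 := by
    by_contra h
    push_neg at h
    have hw0 : star (hC.1.eigenvectorUnitary : Matrix (Fin p) (Fin p) ℝ) *ᵥ v = 0 := funext h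
    have hU' : (hC.1.eigenvectorUnitary : Matrix (Fin p) (Fin p) ℝ)
        * star (hC.1.eigenvectorUnitary : Matrix (Fin p) (Fin p) ℝ) = 1 :=
      Matrix.mem_unitaryGroup_iff.mp hC.1.eigenvectorUnitary.2
    have h2 : (hC.1.eigenvectorUnitary : Matrix (Fin p) (Fin p) ℝ) *ᵥ
        (star (hC.1.eigenvectorUnitary : Matrix (Fin p) (Fin p) ℝ) *ᵥ v) = 0 := by
      rw [hw0, Matrix.mulVec_zero]
    rw [Matrix.mulVec_mulVec, hU', Matrix.one_mulVec] at h2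
    exact hv h2
  have hwpos : 0 < ((star (hC.1.eigenvectorUnitary : Matrix (Fin p) (Fin p) ℝ) *ᵥ v) i0)^2 :=
    (sq_nonneg _).lt_of_ne (Ne.symm (pow_ne_zero 2 hi0))
  -- scalar facts
  have hgkey : ∀ i, ∀ a ∈ D, ∀ b ∈ D, a < b →
      a / (1 - a * hC.1.eigenvalues i) < b / (1 - b * hC.1.eigenvalues i) := by
    intro i a ha b hb hab
    rw [div_lt_div_iff₀ (hdpos a ha i) (hdpos b hb i)]
    nlinarith [hlam_pos i]
  have hgnonneg : ∀ i, ∀ a ∈ D, 0 ≤ a / (1 - a * hC.1.eigenvalues i) :=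
    fun i a ha => div_nonneg ha.1 (hdpos a ha i).le
  -- strict monotonicity of theta, qfun, sfun on D
  have hθmono : StrictMonoOn (theta p C v ρ1 ρ2) D := by
    intro a ha b hb hab
    rw [theta_eq hC v ρ1 ρ2 a (hdne a ha), theta_eq hC v ρ1 ρ2 b (hdne b hb)]
    refine mul_lt_mul_of_pos_left ?_ hρ
    refine Finset.sum_lt_sum (fun i _ => ?_) ⟨i0, Finset.mem_univ i0, ?_⟩
    · exact mul_le_mul_of_nonneg_left (hgkey i a ha b hb hab).le (sq_nonneg _)
    · exact mul_lt_mul_of_pos_left (hgkey i0 a ha b hb hab) hwpos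
  have hqmono : StrictMonoOn (qfun p C) D := by
    intro a ha b hb hab
    rw [qfun_eq hC a (hdne a ha), qfun_eq hC b (hdne b hb)]
    refine mul_lt_mul_of_pos_left ?_ (by positivity)
    refine Finset.sum_lt_sum_of_nonempty Finset.univ_nonempty (fun i _ => ?_)
    refine pow_lt_pow_left₀ ?_ ?_ two_ne_zero
    · exact mul_lt_mul_of_pos_left (hgkey i a ha b hb hab) (hlam_pos i)
    · exact mul_nonneg (hlam_pos i).le (hgnonneg i a ha)
  have hsmono : StrictMonoOn (sfun p C v ρ1 ρ2) D := by
    intro a ha b hb hab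
    rw [sfun_eq hC v ρ1 ρ2 a (hdne a ha), sfun_eq hC v ρ1 ρ2 b (hdne b hb)]
    refine mul_lt_mul_of_pos_left ?_ hρ
    refine Finset.sum_lt_sum (fun i _ => ?_) ⟨i0, Finset.mem_univ i0, ?_⟩
    · refine mul_le_mul_of_nonneg_left ?_ (mul_nonneg (sq_nonneg _) (hlam_pos i).le)
      exact pow_le_pow_left₀ (hgnonneg i a ha) (hgkey i a ha b hb hab).le 2
    · refine mul_lt_mul_of_pos_left ?_ (mul_pos hwpos (hlam_pos i0))
      exact pow_lt_pow_left₀ (hgkey i0 a ha b hb hab) (hgnonneg i0 a ha) two_ne_zero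
  -- values at 0
  have hθ0 : theta p C v ρ1 ρ2 0 = 0 := by simp [theta]
  have hq0 : qfun p C 0 = 0 := by simp [qfun]
  have hs0 : sfun p C v ρ1 ρ2 0 = 0 := by simp [sfun]
  have hm0 : mfun p C v ρ1 ρ2 cl cu 0 = 0 := by simp [mfun, hθ0]
  have hσ0 : sigma2 p C v ρ1 ρ2 cl cu 0 = 0 := by simp [sigma2, hs0, hq0]
  -- positivity on positive points of D
  have hθpos : ∀ ξ ∈ D, 0 < ξ → 0 < theta p C v ρ1 ρ2 ξ := by
    intro ξ hξ h
    have := hθmono h0D hξ h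
    rwa [hθ0] at this
  have hqpos : ∀ ξ ∈ D, 0 < ξ → 0 < qfun p C ξ := by
    intro ξ hξ h
    have := hqmono h0D hξ h
    rwa [hq0] at this
  have hspos : ∀ ξ ∈ D, 0 < ξ → 0 < sfun p C v ρ1 ρ2 ξ := by
    intro ξ hξ h
    have := hsmono h0D hξ h
    rwa [hs0] at this
  have hθlt1 : ∀ ξ ∈ D, ξ < ξm → theta p C v ρ1 ρ2 ξ < 1 := by
    intro ξ hξ h
    have := hθmono hξ hξmD h
    rwa [hθξm] at this
  -- ξsup basics
  have hξsup_pos : 0 < ξsup := by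
    rcases hξsup with ⟨_, h⟩ | ⟨_, h, _⟩
    · rw [h]; exact hξm.1
    · exact h.1
  have hξsup_le : ξsup ≤ ξm := by
    rcases hξsup with ⟨_, h⟩ | ⟨_, h, _⟩
    · rw [h]
    · exact h.2
  have hsupD : ξsup ∈ D := ⟨hξsup_pos.le, lt_of_le_of_lt hξsup_le hξm.2⟩
  have hIooD : ∀ ξ ∈ Set.Ioo (0:ℝ) ξsup, ξ ∈ D :=
    fun ξ hξ => ⟨hξ.1.le, lt_trans (lt_of_lt_of_le hξ.2 hξsup_le) hξm.2⟩
  have hIooltm : ∀ ξ ∈ Set.Ioo (0:ℝ) ξsup, ξ < ξm :=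
    fun ξ hξ => lt_of_lt_of_le hξ.2 hξsup_le
  have hqlt : ∀ ξ ∈ Set.Ioo (0:ℝ) ξsup, qfun p C ξ < cu := by
    intro ξ hξ
    rcases hξsup with ⟨hall, heq⟩ | ⟨_, hmem, hqcu⟩
    · exact hall ξ ⟨hξ.1, heq ▸ hξ.2⟩
    · have := hqmono (hIooD ξ hξ) hsupD hξ.2
      rwa [hqcu] at this
  -- strict monotonicity of F
  have hmono : StrictMonoOn
      (fun ξ => ρ1 * ρ2 * (mfun p C v ρ1 ρ2 cl cu ξ) ^ 2 + sigma2 p C v ρ1 ρ2 cl cu ξ)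
      (Set.Ioo (0 : ℝ) ξsup) := by
    intro a ha b hb hab
    have haD := hIooD a ha
    have hbD := hIooD b hb
    have hθa := hθpos a haD ha.1
    have hθab := hθmono haD hbD hab
    have hθb1 := hθlt1 b hbD (hIooltm b hb)
    have hθa1 : theta p C v ρ1 ρ2 a < 1 := lt_trans hθab hθb1
    have hma : 0 < mfun p C v ρ1 ρ2 cl cu a := by
      rw [mfun]; exact div_pos (by positivity) (by nlinarith)
    have hmab : mfun p C v ρ1 ρ2 cl cu a < mfun p C v ρ1 ρ2 cl cu b := by
      rw [mfun, mfun, div_lt_div_iff₀ (by nlinarith) (by nlinarith)]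
      nlinarith [mul_pos (mul_pos hcl hcu) (sub_pos.mpr hθab)]
    have hmb : 0 < mfun p C v ρ1 ρ2 cl cu b := lt_trans hma hmab
    have hqa := hqpos a haD ha.1
    have hqab := hqmono haD hbD hab
    have hqb := hqlt b hb
    have hsa := hspos a haD ha.1
    have hsab := hsmono haD hbD hab
    have he2 : 2 * cl + mfun p C v ρ1 ρ2 cl cu a * cu
        < 2 * cl + mfun p C v ρ1 ρ2 cl cu b * cu := by nlinarith
    have he3 : (2 * cl + mfun p C v ρ1 ρ2 cl cu a * cu) ^ 2
        < (2 * cl + mfun p C v ρ1 ρ2 cl cu b * cu) ^ 2 :=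
      pow_lt_pow_left₀ he2 (by positivity) two_ne_zero
    have hm2 : (mfun p C v ρ1 ρ2 cl cu a) ^ 2 < (mfun p C v ρ1 ρ2 cl cu b) ^ 2 :=
      pow_lt_pow_left₀ hmab hma.le two_ne_zero
    have ht1 : ρ1 * ρ2 * (2 * cl + mfun p C v ρ1 ρ2 cl cu a * cu) ^ 2 * sfun p C v ρ1 ρ2 a
        < ρ1 * ρ2 * (2 * cl + mfun p C v ρ1 ρ2 cl cu b * cu) ^ 2 * sfun p C v ρ1 ρ2 b :=
      mul_lt_mul'' (mul_lt_mul_of_pos_left he3 hρ) hsab (by positivity) hsa.le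
    have he4 : 4 * cl + (mfun p C v ρ1 ρ2 cl cu a) ^ 2 * cu
        < 4 * cl + (mfun p C v ρ1 ρ2 cl cu b) ^ 2 * cu :=
      add_lt_add_right (mul_lt_mul_of_pos_right hm2 hcu) _
    have ht2 : ρ1 * ρ2 * (4 * cl + (mfun p C v ρ1 ρ2 cl cu a) ^ 2 * cu) * qfun p C a
        < ρ1 * ρ2 * (4 * cl + (mfun p C v ρ1 ρ2 cl cu b) ^ 2 * cu) * qfun p C b :=
      mul_lt_mul'' (mul_lt_mul_of_pos_left he4 hρ) hqab (by positivity) hqa.le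
    have hna : 0 ≤ ρ1 * ρ2 * (2 * cl + mfun p C v ρ1 ρ2 cl cu a * cu) ^ 2 * sfun p C v ρ1 ρ2 a
        + ρ1 * ρ2 * (4 * cl + (mfun p C v ρ1 ρ2 cl cu a) ^ 2 * cu) * qfun p C a := by
      have g1 : (0:ℝ) ≤ ρ1 * ρ2 * (2 * cl + mfun p C v ρ1 ρ2 cl cu a * cu) ^ 2 := by positivity
      have g2 : (0:ℝ) ≤ ρ1 * ρ2 * (4 * cl + (mfun p C v ρ1 ρ2 cl cu a) ^ 2 * cu) := by positivity
      exact add_nonneg (mul_nonneg g1 hsa.le) (mul_nonneg g2 hqa.le)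
    have hDb : 0 < cu * (cu - qfun p C b) := by nlinarith
    have hDba : cu * (cu - qfun p C b) ≤ cu * (cu - qfun p C a) := by nlinarith
    have hσ : sigma2 p C v ρ1 ρ2 cl cu a < sigma2 p C v ρ1 ρ2 cl cu b := by
      rw [sigma2, sigma2]
      calc (ρ1 * ρ2 * (2 * cl + mfun p C v ρ1 ρ2 cl cu a * cu) ^ 2 * sfun p C v ρ1 ρ2 a
            + ρ1 * ρ2 * (4 * cl + (mfun p C v ρ1 ρ2 cl cu a) ^ 2 * cu) * qfun p C a)
            / (cu * (cu - qfun p C a))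
          ≤ (ρ1 * ρ2 * (2 * cl + mfun p C v ρ1 ρ2 cl cu a * cu) ^ 2 * sfun p C v ρ1 ρ2 a
            + ρ1 * ρ2 * (4 * cl + (mfun p C v ρ1 ρ2 cl cu a) ^ 2 * cu) * qfun p C a)
            / (cu * (cu - qfun p C b)) := div_le_div_of_nonneg_left hna hDb hDba
        _ < (ρ1 * ρ2 * (2 * cl + mfun p C v ρ1 ρ2 cl cu b * cu) ^ 2 * sfun p C v ρ1 ρ2 b
            + ρ1 * ρ2 * (4 * cl + (mfun p C v ρ1 ρ2 cl cu b) ^ 2 * cu) * qfun p C b)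
            / (cu * (cu - qfun p C b)) := by
            exact (div_lt_div_iff_of_pos_right hDb).mpr (by linarith)
    exact add_lt_add (mul_lt_mul_of_pos_left hm2 hρ) hσ
  -- continuity within D
  have hgc : ∀ i, ∀ ξ ∈ D,
      ContinuousWithinAt (fun x => x / (1 - x * hC.1.eigenvalues i)) D ξ := by
    intro i ξ hξ
    exact (continuousWithinAt_id.div
      (continuousWithinAt_const.sub (continuousWithinAt_id.mul continuousWithinAt_const))
      (hdne ξ hξ i))
  have hθc : ∀ ξ ∈ D, ContinuousWithinAt (theta p C v ρ1 ρ2) D ξ := by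
    intro ξ hξ
    have hsum : ContinuousWithinAt (fun x => ρ1 * ρ2 *
        ∑ i, ((star (hC.1.eigenvectorUnitary : Matrix (Fin p) (Fin p) ℝ) *ᵥ v) i)^2
          * (x / (1 - x * hC.1.eigenvalues i))) D ξ := by
      refine continuousWithinAt_const.mul ?_
      exact tendsto_finset_sum _ fun i _ => continuousWithinAt_const.mul (hgc i ξ hξ)
    exact hsum.congr (fun y hy => theta_eq hC v ρ1 ρ2 y (hdne y hy))
      (theta_eq hC v ρ1 ρ2 ξ (hdne ξ hξ))
  have hqc : ∀ ξ ∈ D, ContinuousWithinAt (qfun p C) D ξ := by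
    intro ξ hξ
    have hsum : ContinuousWithinAt (fun x => (p:ℝ)⁻¹ *
        ∑ i, (hC.1.eigenvalues i * (x / (1 - x * hC.1.eigenvalues i)))^2) D ξ := by
      refine continuousWithinAt_const.mul ?_
      exact tendsto_finset_sum _ fun i _ => (continuousWithinAt_const.mul (hgc i ξ hξ)).pow 2
    exact hsum.congr (fun y hy => qfun_eq hC y (hdne y hy)) (qfun_eq hC ξ (hdne ξ hξ))
  have hsc : ∀ ξ ∈ D, ContinuousWithinAt (sfun p C v ρ1 ρ2) D ξ := by
    intro ξ hξ
    have hsum : ContinuousWithinAt (fun x => ρ1 * ρ2 *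
        ∑ i, ((star (hC.1.eigenvectorUnitary : Matrix (Fin p) (Fin p) ℝ) *ᵥ v) i)^2
          * hC.1.eigenvalues i * (x / (1 - x * hC.1.eigenvalues i))^2) D ξ := by
      refine continuousWithinAt_const.mul ?_
      exact tendsto_finset_sum _ fun i _ => continuousWithinAt_const.mul ((hgc i ξ hξ).pow 2)
    exact hsum.congr (fun y hy => sfun_eq hC v ρ1 ρ2 y (hdne y hy))
      (sfun_eq hC v ρ1 ρ2 ξ (hdne ξ hξ))
  have hmc : ∀ ξ ∈ D, theta p C v ρ1 ρ2 ξ ≠ 1 →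
      ContinuousWithinAt (mfun p C v ρ1 ρ2 cl cu) D ξ := by
    intro ξ hξ hne
    have : ContinuousWithinAt
        (fun x => 2 * cl * theta p C v ρ1 ρ2 x / (cu * (1 - theta p C v ρ1 ρ2 x))) D ξ := by
      refine ContinuousWithinAt.div (continuousWithinAt_const.mul (hθc ξ hξ))
        (continuousWithinAt_const.mul (continuousWithinAt_const.sub (hθc ξ hξ))) ?_
      intro h
      rcases mul_eq_zero.mp h with h' | h'
      · exact (ne_of_gt hcu) h'
      · exact hne (by linarith [sub_eq_zero.mp h'])
    exact this
  have hFc : ∀ ξ ∈ D, theta p C v ρ1 ρ2 ξ ≠ 1 → qfun p C ξ ≠ cu →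
      ContinuousWithinAt
        (fun ξ => ρ1 * ρ2 * (mfun p C v ρ1 ρ2 cl cu ξ) ^ 2 + sigma2 p C v ρ1 ρ2 cl cu ξ)
        D ξ := by
    intro ξ hξ hne hnq
    have hm := hmc ξ hξ hne
    have hσc : ContinuousWithinAt (sigma2 p C v ρ1 ρ2 cl cu) D ξ := by
      have : ContinuousWithinAt (fun x =>
          (ρ1 * ρ2 * (2 * cl + mfun p C v ρ1 ρ2 cl cu x * cu) ^ 2 * sfun p C v ρ1 ρ2 x
            + ρ1 * ρ2 * (4 * cl + (mfun p C v ρ1 ρ2 cl cu x) ^ 2 * cu) * qfun p C x)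
          / (cu * (cu - qfun p C x))) D ξ := by
        refine ContinuousWithinAt.div ?_
          (continuousWithinAt_const.mul (continuousWithinAt_const.sub (hqc ξ hξ))) ?_
        · refine ContinuousWithinAt.add ?_ ?_
          · exact (continuousWithinAt_const.mul
              ((continuousWithinAt_const.add (hm.mul continuousWithinAt_const)).pow 2)).mul
              (hsc ξ hξ)
          · exact (continuousWithinAt_const.mul
              (continuousWithinAt_const.add ((hm.pow 2).mul continuousWithinAt_const))).mul
              (hqc ξ hξ)
        · intro h
          rcases mul_eq_zero.mp h with h' | h'
          · exact (ne_of_gt hcu) h'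
          · exact hnq (by linarith [sub_eq_zero.mp h'])
      exact this
    exact (continuousWithinAt_const.mul (hm.pow 2)).add hσc
  -- limit at 0
  have htend0 : Filter.Tendsto
      (fun ξ => ρ1 * ρ2 * (mfun p C v ρ1 ρ2 cl cu ξ) ^ 2 + sigma2 p C v ρ1 ρ2 cl cu ξ)
      (nhdsWithin 0 (Set.Ioi 0)) (nhds 0) := by
    have hcw := hFc 0 h0D (by rw [hθ0]; norm_num) (by rw [hq0]; exact (ne_of_gt hcu).symm)
    have hval : ρ1 * ρ2 * (mfun p C v ρ1 ρ2 cl cu 0) ^ 2 + sigma2 p C v ρ1 ρ2 cl cu 0 = 0 := by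
      rw [hm0, hσ0]; ring
    have h1 : nhdsWithin (0:ℝ) (Set.Ioi 0) = nhdsWithin 0 (Set.Ioo (0:ℝ) lmax⁻¹) :=
      (nhdsWithin_Ioo_eq_nhdsGT (inv_pos.mpr hlmax_pos)).symm
    have h2 : nhdsWithin (0:ℝ) (Set.Ioo (0:ℝ) lmax⁻¹) ≤ nhdsWithin 0 D :=
      nhdsWithin_mono _ (fun x hx => ⟨hx.1.le, hx.2⟩)
    rw [h1]
    have := hcw.tendsto
    rw [hval] at this
    exact this.mono_left h2
  -- limit at ξsup
  have hIooMem : Set.Ioo (0:ℝ) ξsup ∈ nhdsWithin ξsup (Set.Iio ξsup) := by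
    rw [mem_nhdsWithin]
    exact ⟨Set.Ioi 0, isOpen_Ioi, hξsup_pos, fun x hx => ⟨hx.1, hx.2⟩⟩
  have hσnonneg : ∀ ξ ∈ Set.Ioo (0:ℝ) ξsup, 0 ≤ sigma2 p C v ρ1 ρ2 cl cu ξ := by
    intro ξ hξ
    have hξD := hIooD ξ hξ
    have hθ1 := hθlt1 ξ hξD (hIooltm ξ hξ)
    have hθp := hθpos ξ hξD hξ.1
    have hmp : 0 ≤ mfun p C v ρ1 ρ2 cl cu ξ := by
      rw [mfun]; exact (div_pos (by positivity) (by nlinarith)).le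
    have hq := hqpos ξ hξD hξ.1
    have hs := hspos ξ hξD hξ.1
    have hqc' := hqlt ξ hξ
    rw [sigma2]
    have g1 : (0:ℝ) ≤ ρ1 * ρ2 * (2 * cl + mfun p C v ρ1 ρ2 cl cu ξ * cu) ^ 2 := by positivity
    have g2 : (0:ℝ) ≤ ρ1 * ρ2 * (4 * cl + (mfun p C v ρ1 ρ2 cl cu ξ) ^ 2 * cu) := by positivity
    exact div_nonneg (add_nonneg (mul_nonneg g1 hs.le) (mul_nonneg g2 hq.le)) (by nlinarith)
  have htendsup : Filter.Tendsto
      (fun ξ => ρ1 * ρ2 * (mfun p C v ρ1 ρ2 cl cu ξ) ^ 2 + sigma2 p C v ρ1 ρ2 cl cu ξ)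
      (nhdsWithin ξsup (Set.Iio ξsup)) Filter.atTop := by
    have hnIio : nhdsWithin ξsup (Set.Iio ξsup) = nhdsWithin ξsup (Set.Ioo (0:ℝ) ξsup) :=
      (nhdsWithin_Ioo_eq_nhdsLT hξsup_pos).symm
    have hnle : nhdsWithin ξsup (Set.Ioo (0:ℝ) ξsup) ≤ nhdsWithin ξsup D :=
      nhdsWithin_mono _ hIooD
    rcases hξsup with ⟨hall, heq⟩ | ⟨hfail, hmem, hqcu⟩
    · -- case ξsup = ξm : m(ξ) → ∞
      subst heq
      have hθt : Filter.Tendsto (theta p C v ρ1 ρ2) (nhdsWithin ξsup (Set.Iio ξsup)) (nhds 1) := by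
        have := (hθc ξsup hsupD).tendsto
        rw [hθξm] at this
        exact this.mono_left (hnIio ▸ hnle)
      have hsubt : Filter.Tendsto (fun ξ => 1 - theta p C v ρ1 ρ2 ξ)
          (nhdsWithin ξsup (Set.Iio ξsup)) (nhdsWithin 0 (Set.Ioi 0)) := by
        rw [tendsto_nhdsWithin_iff]
        constructor
        · have h0 : Filter.Tendsto (fun ξ => 1 - theta p C v ρ1 ρ2 ξ)
              (nhdsWithin ξsup (Set.Iio ξsup)) (nhds (1 - 1)) := tendsto_const_nhds.sub hθt
          simpa using h0
        · filter_upwards [hIooMem] with ξ hξ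
          have := hθlt1 ξ (hIooD ξ hξ) (hIooltm ξ hξ)
          exact Set.mem_Ioi.mpr (by linarith)
      have hinv : Filter.Tendsto (fun ξ => (1 - theta p C v ρ1 ρ2 ξ)⁻¹)
          (nhdsWithin ξsup (Set.Iio ξsup)) Filter.atTop := hsubt.inv_tendsto_nhdsGT_zero
      have hquot : Filter.Tendsto (fun ξ => 2 * cl * theta p C v ρ1 ρ2 ξ / cu)
          (nhdsWithin ξsup (Set.Iio ξsup)) (nhds (2 * cl * 1 / cu)) :=
        (tendsto_const_nhds.mul hθt).div_const cu
      have hMt : Filter.Tendsto (mfun p C v ρ1 ρ2 cl cu)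
          (nhdsWithin ξsup (Set.Iio ξsup)) Filter.atTop := by
        have hmul := Filter.Tendsto.pos_mul_atTop (by positivity : (0:ℝ) < 2 * cl * 1 / cu)
          hquot hinv
        refine hmul.congr fun ξ => ?_
        rw [mfun, div_eq_mul_inv, div_eq_mul_inv, mul_inv]; ring
      have hM2 : Filter.Tendsto (fun ξ => ρ1 * ρ2 * (mfun p C v ρ1 ρ2 cl cu ξ) ^ 2)
          (nhdsWithin ξsup (Set.Iio ξsup)) Filter.atTop := by
        have := Filter.Tendsto.atTop_mul_atTop₀ hMt hMt
        have h2 : Filter.Tendsto (fun ξ => (mfun p C v ρ1 ρ2 cl cu ξ) ^ 2)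
            (nhdsWithin ξsup (Set.Iio ξsup)) Filter.atTop := by
          refine this.congr fun ξ => ?_
          ring
        exact h2.const_mul_atTop hρ
      refine Filter.tendsto_atTop_mono' _ ?_ hM2
      filter_upwards [hIooMem] with ξ hξ
      have := hσnonneg ξ hξ
      linarith
    · -- case q(ξsup) = cu : σ² → ∞
      have hQt : Filter.Tendsto (qfun p C) (nhdsWithin ξsup (Set.Iio ξsup)) (nhds cu) := by
        have := (hqc ξsup hsupD).tendsto
        rw [hqcu] at this
        exact this.mono_left (hnIio ▸ hnle)
      have hDent : Filter.Tendsto (fun ξ => cu * (cu - qfun p C ξ))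
          (nhdsWithin ξsup (Set.Iio ξsup)) (nhdsWithin 0 (Set.Ioi 0)) := by
        rw [tendsto_nhdsWithin_iff]
        constructor
        · have h0 : Filter.Tendsto (fun ξ => cu * (cu - qfun p C ξ))
              (nhdsWithin ξsup (Set.Iio ξsup)) (nhds (cu * (cu - cu))) :=
            tendsto_const_nhds.mul (tendsto_const_nhds.sub hQt)
          simpa using h0
        · filter_upwards [hIooMem] with ξ hξ
          have := hqlt ξ hξ
          exact Set.mem_Ioi.mpr (by nlinarith)
      have hinv : Filter.Tendsto (fun ξ => (cu * (cu - qfun p C ξ))⁻¹)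
          (nhdsWithin ξsup (Set.Iio ξsup)) Filter.atTop := hDent.inv_tendsto_nhdsGT_zero
      have hhalf : ξsup / 2 ∈ Set.Ioo (0:ℝ) ξsup := ⟨by linarith, by linarith⟩
      have hcpos : 0 < ρ1 * ρ2 * (4 * cl) * qfun p C (ξsup / 2) := by
        have := hqpos (ξsup / 2) (hIooD _ hhalf) hhalf.1
        positivity
      have hct : Filter.Tendsto
          (fun ξ => ρ1 * ρ2 * (4 * cl) * qfun p C (ξsup / 2) * (cu * (cu - qfun p C ξ))⁻¹)
          (nhdsWithin ξsup (Set.Iio ξsup)) Filter.atTop :=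
        hinv.const_mul_atTop hcpos
      refine Filter.tendsto_atTop_mono' _ ?_ hct
      have hmemI : Set.Ioo (ξsup/2) ξsup ∈ nhdsWithin ξsup (Set.Iio ξsup) := by
        rw [mem_nhdsWithin]
        exact ⟨Set.Ioi (ξsup/2), isOpen_Ioi, Set.mem_Ioi.mpr (by linarith), fun x hx => ⟨hx.1, hx.2⟩⟩
      filter_upwards [hmemI] with ξ hξ
      have hξI : ξ ∈ Set.Ioo (0:ℝ) ξsup := ⟨by linarith [hξ.1, hξsup_pos], hξ.2⟩
      have hξD := hIooD ξ hξI
      have hθ1 := hθlt1 ξ hξD (hIooltm ξ hξI)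
      have hθp := hθpos ξ hξD hξI.1
      have hmp : 0 ≤ mfun p C v ρ1 ρ2 cl cu ξ := by
        rw [mfun]; exact (div_pos (by positivity) (by nlinarith)).le
      have hq := hqpos ξ hξD hξI.1
      have hs := hspos ξ hξD hξI.1
      have hqc' := hqlt ξ hξI
      have hqmono2 : qfun p C (ξsup/2) ≤ qfun p C ξ :=
        (hqmono (hIooD _ hhalf) hξD hξ.1).le
      have hden : 0 < cu * (cu - qfun p C ξ) := by nlinarith
      have hnum : ρ1 * ρ2 * (4 * cl) * qfun p C (ξsup / 2)
          ≤ ρ1 * ρ2 * (2 * cl + mfun p C v ρ1 ρ2 cl cu ξ * cu) ^ 2 * sfun p C v ρ1 ρ2 ξ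
            + ρ1 * ρ2 * (4 * cl + (mfun p C v ρ1 ρ2 cl cu ξ) ^ 2 * cu) * qfun p C ξ := by
        have g1 : (0:ℝ) ≤ ρ1 * ρ2 * (2 * cl + mfun p C v ρ1 ρ2 cl cu ξ * cu) ^ 2
            * sfun p C v ρ1 ρ2 ξ := mul_nonneg (by positivity) hs.le
        have k1 : ρ1 * ρ2 * (4 * cl) * qfun p C (ξsup / 2)
            ≤ ρ1 * ρ2 * (4 * cl) * qfun p C ξ :=
          mul_le_mul_of_nonneg_left hqmono2 (by positivity)
        have k0 : ρ1 * ρ2 * (4 * cl) ≤ ρ1 * ρ2 * (4 * cl + (mfun p C v ρ1 ρ2 cl cu ξ) ^ 2 * cu) :=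
          mul_le_mul_of_nonneg_left
            (by nlinarith [sq_nonneg (mfun p C v ρ1 ρ2 cl cu ξ)]) hρ.le
        have k2 : ρ1 * ρ2 * (4 * cl) * qfun p C ξ
            ≤ ρ1 * ρ2 * (4 * cl + (mfun p C v ρ1 ρ2 cl cu ξ) ^ 2 * cu) * qfun p C ξ :=
          mul_le_mul_of_nonneg_right k0 hq.le
        linarith
      have hfrac : ρ1 * ρ2 * (4 * cl) * qfun p C (ξsup / 2) * (cu * (cu - qfun p C ξ))⁻¹
          ≤ sigma2 p C v ρ1 ρ2 cl cu ξ := by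
        rw [sigma2, ← div_eq_mul_inv]
        exact (div_le_div_iff_of_pos_right hden).mpr hnum
      have hmsq : (0:ℝ) ≤ ρ1 * ρ2 * (mfun p C v ρ1 ρ2 cl cu ξ) ^ 2 := by positivity
      linarith
  refine ⟨hmono, htend0, htendsup, ?_⟩
  -- existence and uniqueness
  intro e he
  have hFlt : ∀ᶠ ξ in nhdsWithin (0:ℝ) (Set.Ioi 0),
      ρ1 * ρ2 * (mfun p C v ρ1 ρ2 cl cu ξ) ^ 2 + sigma2 p C v ρ1 ρ2 cl cu ξ < e ^ 2 :=
    htend0.eventually_lt_const (by positivity)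
  have hmem0 : ∀ᶠ ξ in nhdsWithin (0:ℝ) (Set.Ioi 0), ξ ∈ Set.Ioo (0:ℝ) ξsup := by
    rw [Filter.eventually_iff, mem_nhdsWithin]
    exact ⟨Set.Iio ξsup, isOpen_Iio, hξsup_pos, fun x hx => ⟨hx.2, hx.1⟩⟩
  obtain ⟨a, hFa, haI⟩ := (hFlt.and hmem0).exists
  have hFgt : ∀ᶠ ξ in nhdsWithin ξsup (Set.Iio ξsup),
      e ^ 2 < ρ1 * ρ2 * (mfun p C v ρ1 ρ2 cl cu ξ) ^ 2 + sigma2 p C v ρ1 ρ2 cl cu ξ :=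
    htendsup.eventually_gt_atTop (e ^ 2)
  obtain ⟨b, hFb, hbI⟩ := (hFgt.and (Filter.eventually_of_mem hIooMem (fun x hx => hx))).exists
  have hab : a < b := by
    rcases lt_trichotomy a b with h | h | h
    · exact h
    · exfalso; rw [h] at hFa; linarith
    · exfalso
      have h2 := hmono hbI haI h
      simp only at h2
      linarith
  have hIccsub : Set.Icc a b ⊆ Set.Ioo (0:ℝ) ξsup :=
    fun x hx => ⟨lt_of_lt_of_le haI.1 hx.1, lt_of_le_of_lt hx.2 hbI.2⟩
  have hcont : ContinuousOn
      (fun ξ => ρ1 * ρ2 * (mfun p C v ρ1 ρ2 cl cu ξ) ^ 2 + sigma2 p C v ρ1 ρ2 cl cu ξ)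
      (Set.Icc a b) := by
    intro x hx
    have hxI := hIccsub hx
    have hxD := hIooD x hxI
    have hθ1 := hθlt1 x hxD (hIooltm x hxI)
    have hq1 := hqlt x hxI
    exact ((hFc x hxD (ne_of_lt hθ1) (ne_of_lt hq1)).mono
      (fun y hy => hIooD y (hIccsub hy))).mono (fun y hy => hy)
  have hIVT := intermediate_value_Icc hab.le hcont
  have hE : e ^ 2 ∈ Set.Icc
      (ρ1 * ρ2 * (mfun p C v ρ1 ρ2 cl cu a) ^ 2 + sigma2 p C v ρ1 ρ2 cl cu a)
      (ρ1 * ρ2 * (mfun p C v ρ1 ρ2 cl cu b) ^ 2 + sigma2 p C v ρ1 ρ2 cl cu b) :=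
    ⟨hFa.le, hFb.le⟩
  obtain ⟨ξe, hξe, hFe⟩ := hIVT hE
  have hξeI : ξe ∈ Set.Ioo (0:ℝ) ξsup := hIccsub hξe
  refine ⟨ξe, ⟨hξeI, hFe⟩, ?_⟩
  rintro y ⟨hyI, hFy⟩
  exact hmono.injOn hyI hξeI (by rw [hFy]; exact hFe.symm)
end

section
/- Let p be a positive integer, C a real symmetric positive definite p×p matrix, Δ ∈ ℝ^p nonzero, ρ_1, ρ_2 > 0 and c_l, c_u > 0. With θ(ξ) = ρ_1 ρ_2 ξ Δ^T (I_p − ξ C)^{−1} Δ, q(ξ) = (ξ²/p) tr(((I_p − ξ C)^{−1} C)²), s(ξ) = ρ_1 ρ_2 ξ² Δ^T (I_p − ξ C)^{−1} C (I_p − ξ C)^{−1} Δ, m(ξ) = 2 c_l θ(ξ)/(c_u (1 − θ(ξ))), and σ²(ξ) = [ρ_1 ρ_2 (2 c_l + m(ξ) c_u)² s(ξ) + ρ_1 ρ_2 (4 c_l + m(ξ)² c_u) q(ξ)] / (c_u (c_u − q(ξ))), the ratio σ²(ξ)/m(ξ)² converges, as ξ → 0⁺, to Δ^T C Δ / ‖Δ‖⁴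 + tr(C²) / (p ‖Δ‖⁴ ρ_1 ρ_2 c_l). -/
open Matrix BigOperators

/-- Auxiliary: `a(ξ) = ρ₁ρ₂ Δᵀ (I-ξC)⁻¹ Δ`, so that `θ(ξ) = ξ a(ξ)`. -/
noncomputable def aA (p : ℕ) (C : Matrix (Fin p) (Fin p) ℝ) (v : Fin p → ℝ)
    (ρ1 ρ2 ξ : ℝ) : ℝ :=
  ρ1 * ρ2 * (v ⬝ᵥ (resolv p C ξ *ᵥ v))

/-- Auxiliary: the common numerator factor. -/
noncomputable def NN (p : ℕ) (C : Matrix (Fin p) (Fin p) ℝ) (v : Fin p → ℝ)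
    (ρ1 ρ2 cl cu ξ : ℝ) : ℝ :=
  ρ1 * ρ2 * (2 * cl + mfun p C v ρ1 ρ2 cl cu ξ * cu) ^ 2
      * (ρ1 * ρ2 * (v ⬝ᵥ ((resolv p C ξ * C * resolv p C ξ) *ᵥ v)))
    + ρ1 * ρ2 * (4 * cl + (mfun p C v ρ1 ρ2 cl cu ξ) ^ 2 * cu)
      * (Matrix.trace ((resolv p C ξ * C) ^ 2) / p)

/-- Auxiliary: the ratio `σ²/m²` rewritten with all removable singularities removed. -/
noncomputable def GG (p : ℕ) (C : Matrix (Fin p) (Fin p) ℝ) (v : Fin p → ℝ)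
    (ρ1 ρ2 cl cu ξ : ℝ) : ℝ :=
  NN p C v ρ1 ρ2 cl cu ξ * (cu * (1 - ξ * aA p C v ρ1 ρ2 ξ) ^ 2)
    / ((cu - qfun p C ξ) * (4 * cl ^ 2 * (aA p C v ρ1 ρ2 ξ) ^ 2))

lemma keylemma (ξ a N cu cl q : ℝ) (hξ : ξ ≠ 0) (ha : a ≠ 0)
    (hq : cu - q ≠ 0) (hcu : cu ≠ 0) (hcl : cl ≠ 0) :
    (ξ ^ 2 * N) / (cu * (cu - q)) / (2 * cl * (ξ * a) / (cu * (1 - ξ * a))) ^ 2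
      = N * (cu * (1 - ξ * a) ^ 2) / ((cu - q) * (4 * cl ^ 2 * a ^ 2)) := by
  field_simp
  ring

/-- as `ξ → 0⁺`, the ratio `σ²(ξ)/m(ξ)²` converges to
`ΔᵀCΔ/‖Δ‖⁴ + tr(C²)/(p ‖Δ‖⁴ ρ₁ ρ₂ c_l)`, the inverse performance measure of
Laplacian regularization. -/
theorem stmt16 (p : ℕ) (hp : 0 < p) (C : Matrix (Fin p) (Fin p) ℝ) (hC : C.PosDef)
    (Δ : Fin p → ℝ) (hΔ : Δ ≠ 0) (ρ1 ρ2 cl cu : ℝ)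
    (hρ1 : 0 < ρ1) (hρ2 : 0 < ρ2) (hcl : 0 < cl) (hcu : 0 < cu) :
    Filter.Tendsto
      (fun ξ => sigma2 p C Δ ρ1 ρ2 cl cu ξ / (mfun p C Δ ρ1 ρ2 cl cu ξ) ^ 2)
      (nhdsWithin 0 (Set.Ioi 0))
      (nhds (Δ ⬝ᵥ (C *ᵥ Δ) / (∑ i, Δ i ^ 2) ^ 2 +
        Matrix.trace (C ^ 2) / (p * (∑ i, Δ i ^ 2) ^ 2 * ρ1 * ρ2 * cl))) := by
  have hp' : (p : ℝ) ≠ 0 := Nat.cast_ne_zero.mpr hp.ne'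
  -- positivity of `Δ ⬝ᵥ Δ`
  obtain ⟨i0, hi0⟩ := Function.ne_iff.mp hΔ
  have hA0 : 0 < Δ ⬝ᵥ Δ := by
    apply Finset.sum_pos' (fun i _ => mul_self_nonneg _)
    exact ⟨i0, Finset.mem_univ _, mul_self_pos.mpr hi0⟩
  have hsum : (∑ i, Δ i ^ 2) = Δ ⬝ᵥ Δ := by
    simp [dotProduct, sq]
  -- continuity of the resolvent at 0
  have hR0 : resolv p C 0 = 1 := by simp [resolv]
  have hf : Continuous (fun ξ : ℝ => (1 : Matrix (Fin p) (Fin p) ℝ) - ξ • C) :=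
    continuous_const.sub (continuous_id.smul continuous_const)
  have hinv : ContinuousAt Inv.inv ((1 : Matrix (Fin p) (Fin p) ℝ) - (0 : ℝ) • C) := by
    apply continuousAt_matrix_inv
    have h1 : ((1 : Matrix (Fin p) (Fin p) ℝ) - (0 : ℝ) • C).det = 1 := by simp
    rw [h1, Ring.inverse_eq_inv']
    exact continuousAt_inv₀ one_ne_zero
  have hR : ContinuousAt (fun ξ : ℝ => resolv p C ξ) 0 := by
    have h2 : ContinuousAt (fun ξ : ℝ => ((1 : Matrix (Fin p) (Fin p) ℝ) - ξ • C)⁻¹) 0 :=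
      ContinuousAt.comp (g := Inv.inv)
        (f := fun ξ : ℝ => (1 : Matrix (Fin p) (Fin p) ℝ) - ξ • C) hinv hf.continuousAt
    exact h2
  -- continuity of the scalar building blocks at 0
  have haA : ContinuousAt (fun ξ : ℝ => aA p C Δ ρ1 ρ2 ξ) 0 := by
    have hg : Continuous (fun M : Matrix (Fin p) (Fin p) ℝ => ρ1 * ρ2 * (Δ ⬝ᵥ (M *ᵥ Δ))) :=
      continuous_const.mul
        ((continuous_const : Continuous fun _ : Matrix (Fin p) (Fin p) ℝ => Δ).dotProduct
          (continuous_id.matrix_mulVec continuous_const))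
    have := hg.continuousAt.comp hR
    simpa [aA, Function.comp_def] using this
  have haA0 : aA p C Δ ρ1 ρ2 0 = ρ1 * ρ2 * (Δ ⬝ᵥ Δ) := by
    simp [aA, hR0, Matrix.one_mulVec]
  have haA0pos : 0 < aA p C Δ ρ1 ρ2 0 := by
    rw [haA0]; positivity
  have hθ : ContinuousAt (fun ξ : ℝ => theta p C Δ ρ1 ρ2 ξ) 0 := by
    have : (fun ξ : ℝ => theta p C Δ ρ1 ρ2 ξ)
        = fun ξ : ℝ => ξ * aA p C Δ ρ1 ρ2 ξ := by
      funext ξ; simp only [theta, aA]; ring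
    rw [this]
    exact continuousAt_id.mul haA
  have hθ0 : theta p C Δ ρ1 ρ2 0 = 0 := by simp [theta]
  have hm : ContinuousAt (fun ξ : ℝ => mfun p C Δ ρ1 ρ2 cl cu ξ) 0 := by
    apply ContinuousAt.div
    · exact continuousAt_const.mul hθ
    · exact continuousAt_const.mul (continuousAt_const.sub hθ)
    · rw [hθ0]; simpa using hcu.ne'
  have hm0 : mfun p C Δ ρ1 ρ2 cl cu 0 = 0 := by
    simp [mfun, hθ0]
  have hT : ContinuousAt (fun ξ : ℝ => Matrix.trace ((resolv p C ξ * C) ^ 2)) 0 := by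
    have hg : Continuous (fun M : Matrix (Fin p) (Fin p) ℝ => Matrix.trace ((M * C) ^ 2)) := by
      have : (fun M : Matrix (Fin p) (Fin p) ℝ => Matrix.trace ((M * C) ^ 2))
          = fun M : Matrix (Fin p) (Fin p) ℝ => Matrix.trace ((M * C) * (M * C)) := by
        funext M; rw [pow_two]
      rw [this]
      exact ((continuous_id.matrix_mul continuous_const).matrix_mul
        (continuous_id.matrix_mul continuous_const)).matrix_trace
    have := hg.continuousAt.comp hR
    simpa [Function.comp_def] using this
  have hq : ContinuousAt (fun ξ : ℝ => qfun p C ξ) 0 := by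
    have : (fun ξ : ℝ => qfun p C ξ)
        = fun ξ : ℝ => ξ ^ 2 / p * Matrix.trace ((resolv p C ξ * C) ^ 2) := by
      funext ξ; rfl
    rw [this]
    exact ((continuousAt_id.pow 2).div_const _).mul hT
  have hq0 : qfun p C 0 = 0 := by simp [qfun]
  have hS : ContinuousAt
      (fun ξ : ℝ => Δ ⬝ᵥ ((resolv p C ξ * C * resolv p C ξ) *ᵥ Δ)) 0 := by
    have hg : Continuous (fun M : Matrix (Fin p) (Fin p) ℝ => Δ ⬝ᵥ ((M * C * M) *ᵥ Δ)) :=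
      (continuous_const : Continuous fun _ : Matrix (Fin p) (Fin p) ℝ => Δ).dotProduct
        (((continuous_id.matrix_mul continuous_const).matrix_mul continuous_id).matrix_mulVec
          continuous_const)
    have := hg.continuousAt.comp hR
    simpa [Function.comp_def] using this
  have hS0 : Δ ⬝ᵥ ((resolv p C 0 * C * resolv p C 0) *ᵥ Δ) = Δ ⬝ᵥ (C *ᵥ Δ) := by
    rw [hR0, Matrix.one_mul, Matrix.mul_one]
  -- continuity of NN and GG at 0
  have hNN : ContinuousAt (fun ξ : ℝ => NN p C Δ ρ1 ρ2 cl cu ξ) 0 := by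
    apply ContinuousAt.add
    · exact ((continuousAt_const.mul ((continuousAt_const.add
        (hm.mul continuousAt_const)).pow 2)).mul (continuousAt_const.mul hS))
    · exact (continuousAt_const.mul (continuousAt_const.add
        ((hm.pow 2).mul continuousAt_const))).mul (hT.div_const _)
  have hGG : ContinuousAt (fun ξ : ℝ => GG p C Δ ρ1 ρ2 cl cu ξ) 0 := by
    apply ContinuousAt.div
    · exact hNN.mul (continuousAt_const.mul
        ((continuousAt_const.sub (continuousAt_id.mul haA)).pow 2))
    · exact (continuousAt_const.sub hq).mul
        (continuousAt_const.mul (haA.pow 2))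
    · rw [hq0, sub_zero]
      have : (0:ℝ) < cu * (4 * cl ^ 2 * aA p C Δ ρ1 ρ2 0 ^ 2) := by positivity
      exact this.ne'
  -- the value of GG at 0
  have hGG0 : GG p C Δ ρ1 ρ2 cl cu 0 =
      Δ ⬝ᵥ (C *ᵥ Δ) / (∑ i, Δ i ^ 2) ^ 2 +
        Matrix.trace (C ^ 2) / (p * (∑ i, Δ i ^ 2) ^ 2 * ρ1 * ρ2 * cl) := by
    rw [hsum]
    simp only [GG, NN, hm0, hq0, haA0, hS0, hR0, Matrix.one_mul, Matrix.mul_one]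
    have hd : Δ ⬝ᵥ Δ ≠ 0 := hA0.ne'
    have hcu' : cu ≠ 0 := hcu.ne'
    field_simp
    ring
  -- eventual equality on `(0, ∞)` near 0
  have hev : ∀ᶠ ξ in nhdsWithin (0:ℝ) (Set.Ioi 0),
      GG p C Δ ρ1 ρ2 cl cu ξ
        = sigma2 p C Δ ρ1 ρ2 cl cu ξ / (mfun p C Δ ρ1 ρ2 cl cu ξ) ^ 2 := by
    have e1 : ∀ᶠ ξ in nhdsWithin (0:ℝ) (Set.Ioi 0), 0 < aA p C Δ ρ1 ρ2 ξ :=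
      (haA.eventually (eventually_gt_nhds haA0pos)).filter_mono nhdsWithin_le_nhds
    have e2 : ∀ᶠ ξ in nhdsWithin (0:ℝ) (Set.Ioi 0), qfun p C ξ < cu := by
      have : qfun p C 0 < cu := by rw [hq0]; exact hcu
      exact (hq.eventually (eventually_lt_nhds this)).filter_mono nhdsWithin_le_nhds
    filter_upwards [e1, e2, self_mem_nhdsWithin] with ξ ha' hq' hξ'
    have hξ0 : (ξ:ℝ) ≠ 0 := (Set.mem_Ioi.mp hξ').ne'
    have hθeq : theta p C Δ ρ1 ρ2 ξ = ξ * aA p C Δ ρ1 ρ2 ξ := by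
      simp only [theta, aA]; ring
    have emf : mfun p C Δ ρ1 ρ2 cl cu ξ
        = 2 * cl * (ξ * aA p C Δ ρ1 ρ2 ξ) / (cu * (1 - ξ * aA p C Δ ρ1 ρ2 ξ)) := by
      rw [mfun, hθeq]
    have esig : sigma2 p C Δ ρ1 ρ2 cl cu ξ
        = (ξ ^ 2 * NN p C Δ ρ1 ρ2 cl cu ξ) / (cu * (cu - qfun p C ξ)) := by
      simp only [sigma2, sfun, qfun, NN]
      ring
    rw [esig, emf, GG,
      keylemma ξ (aA p C Δ ρ1 ρ2 ξ) (NN p C Δ ρ1 ρ2 cl cu ξ) cu cl (qfun p C ξ)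
        hξ0 ha'.ne' (sub_ne_zero.mpr hq'.ne') hcu.ne' hcl.ne']
  -- conclude
  have hlim : Filter.Tendsto (fun ξ : ℝ => GG p C Δ ρ1 ρ2 cl cu ξ)
      (nhdsWithin 0 (Set.Ioi 0)) (nhds (GG p C Δ ρ1 ρ2 cl cu 0)) :=
    hGG.continuousWithinAt
  rw [hGG0] at hlim
  exact hlim.congr' hev
end

section
/- Let p be a positive integer, C a real symmetric positive definite p×p matrix with largest eigenvalue λ_max(C), v ∈ ℝ^p nonzero, and ρ_1, ρ_2 > 0. Define θ(ξ) = ρ_1 ρ_2 ξ v^T (I_p − ξ C)^{−1} v, q(ξ) = (ξ²/p) tr(((I_p − ξ C)^{−1} C)²), s(ξ) = ρ_1 ρ_2 ξ² v^T (I_p − ξ C)^{−1} C (I_p − ξ C)^{−1} v, and for parameters c_l, c_u > 0 define m_{c_l,c_u}(ξ) = 2 c_l θ(ξ)/(c_u (1 − θ(ξ))) and σ²_{c_l,c_u}(ξ) = [ρ_1 ρ_2 (2 c_l + m_{c_l,c_u}(ξ) c_u)² s(ξ) + ρ_1 ρ_2 (4 c_l + m_{c_l,c_u}(ξ)² c_u)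 q(ξ)] / (c_u (c_u − q(ξ))). Fix ξ ∈ (0, 1/λ_max(C)) with θ(ξ) < 1 and q(ξ) < c_u. Then for any c_l' ≥ c_l and c_u' ≥ c_u with (c_l', c_u') ≠ (c_l, c_u), one has σ²_{c_l',c_u'}(ξ)/m_{c_l',c_u'}(ξ)² < σ²_{c_l,c_u}(ξ)/m_{c_l,c_u}(ξ)²; that is, at fixed ξ the variance-over-squared-mean ratio is strictly decreasing in both c_l and c_u. -/
open Matrix BigOperators

section Aux

variable {n : Type*} [Fintype n] [DecidableEq n]

/-- Conjugation of a positive definite real matrix by a unitary matrix is positive definite. -/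
lemma posDef_unitary_conj {A : Matrix n n ℝ} (hA : A.PosDef) (U : Matrix.unitaryGroup n ℝ) :
    ((U : Matrix n n ℝ) * A * star (U : Matrix n n ℝ)).PosDef := by
  refine Matrix.PosDef.of_dotProduct_mulVec_pos ?_ fun x hx => ?_
  · have := (hA.posSemidef.mul_mul_conjTranspose_same (U : Matrix n n ℝ)).1
    simpa [Matrix.star_eq_conjTranspose] using this
  · have hy : star (U : Matrix n n ℝ) *ᵥ x ≠ 0 := by
      intro h
      apply hx
      have := congrArg (fun z => (U : Matrix n n ℝ) *ᵥ z) h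
      simpa [Matrix.mulVec_mulVec, (Matrix.mem_unitaryGroup_iff).mp U.2] using this
    have := hA.dotProduct_mulVec_pos hy
    simpa only [Matrix.star_eq_conjTranspose, star_mulVec, Matrix.dotProduct_mulVec,
      vecMul_vecMul, Matrix.conjTranspose_conjTranspose] using this

/-- For `0 < ξ < 1/λ_max(C)`, the matrix `1 - ξ C` is positive definite. -/
lemma one_sub_smul_posDef {C : Matrix n n ℝ} (hC : C.PosDef) (lmax ξ : ℝ)
    (hlmax : IsGreatest (Set.range hC.1.eigenvalues) lmax)
    (hξ0 : 0 < ξ) (hξ1 : ξ < lmax⁻¹) :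
    ((1 : Matrix n n ℝ) - ξ • C).PosDef := by
  classical
  have hlpos : 0 < lmax := by
    obtain ⟨i, hi⟩ := hlmax.1
    exact lt_of_lt_of_le (hC.eigenvalues_pos i) (hi ▸ hlmax.2 ⟨i, rfl⟩)
  have hξl : ξ * lmax < 1 := by
    have := mul_lt_mul_of_pos_right hξ1 hlpos
    rwa [inv_mul_cancel₀ hlpos.ne'] at this
  set U := hC.1.eigenvectorUnitary with hU
  have hspec : C = (U : Matrix n n ℝ) * diagonal hC.1.eigenvalues * star (U : Matrix n n ℝ) := by
    have := hC.1.spectral_theorem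
    simpa using this
  have hdiag : ((1 : Matrix n n ℝ) - ξ • diagonal hC.1.eigenvalues)
      = diagonal (fun i => 1 - ξ * hC.1.eigenvalues i) := by
    ext i j
    by_cases h : i = j <;>
      simp [Matrix.one_apply, Matrix.diagonal_apply, h]
  have hkey : (1 : Matrix n n ℝ) - ξ • C
      = (U : Matrix n n ℝ) * diagonal (fun i => 1 - ξ * hC.1.eigenvalues i)
        * star (U : Matrix n n ℝ) := by
    rw [← hdiag, mul_sub, sub_mul, mul_one, Matrix.mul_smul, Matrix.smul_mul,
      (Matrix.mem_unitaryGroup_iff).mp U.2, ← hspec]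
  rw [hkey]
  apply posDef_unitary_conj
  apply Matrix.PosDef.diagonal
  intro i
  have h1 : hC.1.eigenvalues i ≤ lmax := hlmax.2 ⟨i, rfl⟩
  have : ξ * hC.1.eigenvalues i ≤ ξ * lmax := mul_le_mul_of_nonneg_left h1 hξ0.le
  linarith

/-- The purely arithmetic monotonicity fact behind statement 17. -/
lemma ratio_mono (ρ θ q s cl cu cl' cu' : ℝ) (hρ : 0 < ρ) (hθ0 : 0 < θ) (hθ1 : θ < 1)
    (hq : 0 < q) (hs : 0 < s) (hcl : 0 < cl) (hqc : q < cu) (h1 : cl ≤ cl') (h2 : cu ≤ cu')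
    (h3 : cl < cl' ∨ cu < cu') :
    ρ * (cu' * s / θ ^ 2 + cu' * q * (1 - θ) ^ 2 / (cl' * θ ^ 2) + q) / (cu' - q)
      < ρ * (cu * s / θ ^ 2 + cu * q * (1 - θ) ^ 2 / (cl * θ ^ 2) + q) / (cu - q) := by
  have hθne : θ ≠ 0 := hθ0.ne'
  have honeθ : (0 : ℝ) < (1 - θ) ^ 2 := pow_pos (by linarith) 2
  have hcl' : 0 < cl' := lt_of_lt_of_le hcl h1
  have hqc' : q < cu' := lt_of_lt_of_le hqc h2
  have hcu0 : 0 < cu := hq.trans hqc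
  have hcu0' : 0 < cu' := hq.trans hqc'
  have hd : 0 < cu - q := by linarith
  have hd' : 0 < cu' - q := by linarith
  set A : ℝ := ρ * s / θ ^ 2 with hA
  set B : ℝ := ρ * q * (1 - θ) ^ 2 / θ ^ 2 with hB
  have hApos : 0 < A := by positivity
  have hBpos : 0 < B := by positivity
  have hrw : ∀ a b : ℝ, 0 < a → q < b →
      ρ * (b * s / θ ^ 2 + b * q * (1 - θ) ^ 2 / (a * θ ^ 2) + q) / (b - q)
        = A * (b / (b - q)) + B * (b / (b - q)) / a + ρ * q / (b - q) := by
    intro a b ha hb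
    have hbq : b - q ≠ 0 := by linarith
    rw [hA, hB]
    field_simp
  rw [hrw cl cu hcl hqc, hrw cl' cu' hcl' hqc']
  have hg'pos : 0 < cu' / (cu' - q) := div_pos hcu0' hd'
  have hgle : cu' / (cu' - q) ≤ cu / (cu - q) := by
    rw [div_le_div_iff₀ hd' hd]
    nlinarith
  have hT2 : B * (cu' / (cu' - q)) / cl' ≤ B * (cu / (cu - q)) / cl :=
    div_le_div₀ (by positivity) (mul_le_mul_of_nonneg_left hgle hBpos.le) hcl h1
  rcases lt_or_eq_of_le h2 with h2' | h2'
  · have hglt : cu' / (cu' - q) < cu / (cu - q) := by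
      rw [div_lt_div_iff₀ hd' hd]
      nlinarith
    have hT1 : A * (cu' / (cu' - q)) < A * (cu / (cu - q)) :=
      mul_lt_mul_of_pos_left hglt hApos
    have hT3 : ρ * q / (cu' - q) < ρ * q / (cu - q) :=
      div_lt_div_of_pos_left (by positivity) hd (by linarith)
    linarith
  · subst h2'
    have hclt : cl < cl' := by
      rcases h3 with h | h
      · exact h
      · exact absurd h (lt_irrefl _)
    have hT2' : B * (cu / (cu - q)) / cl' < B * (cu / (cu - q)) / cl :=
      div_lt_div_of_pos_left (by positivity) hcl hclt
    linarith

end Aux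

/-- at a fixed `ξ ∈ (0, 1/λ_max(C))` with `θ(ξ) < 1` and `q(ξ) < c_u`, the
variance-over-squared-mean ratio `σ²_{c_l,c_u}(ξ)/m_{c_l,c_u}(ξ)²` is strictly decreasing
in both `c_l` and `c_u`: for `c_l' ≥ c_l`, `c_u' ≥ c_u` with `(c_l', c_u') ≠ (c_l, c_u)`,
the ratio at `(c_l', c_u')` is strictly smaller than at `(c_l, c_u)`. -/
theorem stmt17 (p : ℕ) (hp : 0 < p) (C : Matrix (Fin p) (Fin p) ℝ) (hC : C.PosDef)
    (lmax : ℝ) (hlmax : IsGreatest (Set.range hC.1.eigenvalues) lmax)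
    (v : Fin p → ℝ) (hv : v ≠ 0) (ρ1 ρ2 cl cu : ℝ)
    (hρ1 : 0 < ρ1) (hρ2 : 0 < ρ2) (hcl : 0 < cl) (hcu : 0 < cu)
    (ξ : ℝ) (hξ : ξ ∈ Set.Ioo (0 : ℝ) lmax⁻¹)
    (hθ : theta p C v ρ1 ρ2 ξ < 1) (hq : qfun p C ξ < cu)
    (cl' cu' : ℝ) (hcl' : cl ≤ cl') (hcu' : cu ≤ cu') (hne : (cl', cu') ≠ (cl, cu)) :
    sigma2 p C v ρ1 ρ2 cl' cu' ξ / (mfun p C v ρ1 ρ2 cl' cu' ξ) ^ 2 <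
    sigma2 p C v ρ1 ρ2 cl cu ξ / (mfun p C v ρ1 ρ2 cl cu ξ) ^ 2 := by
  obtain ⟨hξ0, hξ1⟩ := hξ
  -- `1 - ξ C` is positive definite, hence so is the resolvent
  have hA : ((1 : Matrix (Fin p) (Fin p) ℝ) - ξ • C).PosDef :=
    one_sub_smul_posDef hC lmax ξ hlmax hξ0 hξ1
  have hR : (resolv p C ξ).PosDef := hA.inv
  have hAdet : IsUnit ((1 : Matrix (Fin p) (Fin p) ℝ) - ξ • C).det := hA.det_pos.ne'.isUnit
  set R := resolv p C ξ with hRdef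
  have hRA : R * ((1 : Matrix (Fin p) (Fin p) ℝ) - ξ • C) = 1 := nonsing_inv_mul _ hAdet
  have hAR : ((1 : Matrix (Fin p) (Fin p) ℝ) - ξ • C) * R = 1 := mul_nonsing_inv _ hAdet
  -- transposes
  have hCt : Cᵀ = C := by
    have := hC.1
    simpa [Matrix.IsHermitian, Matrix.conjTranspose_eq_transpose_of_trivial] using this
  have hRt : Rᵀ = R := by
    have := hR.1
    simpa [Matrix.IsHermitian, Matrix.conjTranspose_eq_transpose_of_trivial] using this
  -- C commutes with R
  have hcomm : C * R = R * C := by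
    have h1 : ((1 : Matrix (Fin p) (Fin p) ℝ) - ξ • C) * C
        = C * ((1 : Matrix (Fin p) (Fin p) ℝ) - ξ • C) := by
      rw [sub_mul, mul_sub, one_mul, mul_one, Matrix.smul_mul, Matrix.mul_smul]
    calc C * R = R * (((1 : Matrix (Fin p) (Fin p) ℝ) - ξ • C) * C) * R := by
          rw [← mul_assoc, hRA, one_mul]
      _ = R * C * (((1 : Matrix (Fin p) (Fin p) ℝ) - ξ • C) * R) := by
          rw [h1]; simp only [mul_assoc]
      _ = R * C := by rw [hAR, mul_one]
  -- positivity of θ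
  have hθpos : 0 < theta p C v ρ1 ρ2 ξ := by
    have := hR.dotProduct_mulVec_pos hv
    simp only [star_trivial] at this
    unfold theta
    positivity
  -- positivity of s
  have hspos : 0 < sfun p C v ρ1 ρ2 ξ := by
    have hRv : R *ᵥ v ≠ 0 := by
      intro h
      apply hv
      have := congrArg (fun z => ((1 : Matrix (Fin p) (Fin p) ℝ) - ξ • C) *ᵥ z) h
      simpa [Matrix.mulVec_mulVec, hAR] using this
    have hpos : 0 < (R *ᵥ v) ⬝ᵥ (C *ᵥ (R *ᵥ v)) := by
      have := hC.dotProduct_mulVec_pos hRv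
      simpa using this
    have hrw : v ⬝ᵥ ((R * C * R) *ᵥ v) = (R *ᵥ v) ⬝ᵥ (C *ᵥ (R *ᵥ v)) := by
      rw [← Matrix.mulVec_mulVec, ← Matrix.mulVec_mulVec, Matrix.dotProduct_mulVec v R,
        ← Matrix.mulVec_transpose, hRt]
    unfold sfun
    rw [← hRdef, hrw]
    positivity
  -- positivity of q
  have hqpos : 0 < qfun p C ξ := by
    have hM : (R * C)ᵀ = R * C := by
      rw [Matrix.transpose_mul, hCt, hRt, hcomm]
    have hMne : R * C ≠ 0 := by
      intro h
      have hC0 : C = 0 := by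
        have := congrArg (fun Z => ((1 : Matrix (Fin p) (Fin p) ℝ) - ξ • C) * Z) h
        simpa [← mul_assoc, hAR] using this
      have hdet := hC.det_pos
      rw [hC0, (by haveI : Nonempty (Fin p) := ⟨⟨0, hp⟩⟩; exact Matrix.det_zero : det (0 : Matrix (Fin p) (Fin p) ℝ) = 0)] at hdet
      exact lt_irrefl 0 hdet
    have hex : ∃ i j, (R * C) i j ≠ 0 := by
      by_contra h
      push_neg at h
      exact hMne (by ext i j; simpa using h i j)
    have htr : 0 < Matrix.trace ((R * C) ^ 2) := by
      rw [pow_two, Matrix.trace]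
      have hdiag : ∀ i, Matrix.diag ((R * C) * (R * C)) i = ∑ j, ((R * C) i j) ^ 2 := by
        intro i
        rw [Matrix.diag_apply, Matrix.mul_apply]
        refine Finset.sum_congr rfl fun j _ => ?_
        have hsymm : (R * C) j i = (R * C) i j := by
          have := congrFun (congrFun hM i) j
          simpa [Matrix.transpose_apply] using this
        rw [hsymm, sq]
      rw [Finset.sum_congr rfl fun i _ => hdiag i]
      obtain ⟨i, j, hij⟩ := hex
      refine Finset.sum_pos' (fun k _ => Finset.sum_nonneg fun l _ => sq_nonneg _) ⟨i, Finset.mem_univ i, ?_⟩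
      exact Finset.sum_pos' (fun l _ => sq_nonneg _) ⟨j, Finset.mem_univ j, (sq_nonneg _).lt_of_ne (Ne.symm (pow_ne_zero 2 hij))⟩
    have hppos : (0 : ℝ) < p := Nat.cast_pos.mpr hp
    unfold qfun
    rw [← hRdef]
    exact mul_pos (by positivity) htr
  -- closed form for the ratio
  have hθne : theta p C v ρ1 ρ2 ξ ≠ 0 := hθpos.ne'
  have h1θ : (1 : ℝ) - theta p C v ρ1 ρ2 ξ ≠ 0 := by linarith
  have key : ∀ a b : ℝ, 0 < a → qfun p C ξ < b →
      sigma2 p C v ρ1 ρ2 a b ξ / (mfun p C v ρ1 ρ2 a b ξ) ^ 2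
        = ρ1 * ρ2 * (b * sfun p C v ρ1 ρ2 ξ / (theta p C v ρ1 ρ2 ξ) ^ 2
            + b * qfun p C ξ * (1 - theta p C v ρ1 ρ2 ξ) ^ 2 / (a * (theta p C v ρ1 ρ2 ξ) ^ 2)
            + qfun p C ξ) / (b - qfun p C ξ) := by
    intro a b ha hb
    have hbq : b - qfun p C ξ ≠ 0 := by linarith
    have hb0 : b ≠ 0 := by nlinarith
    unfold sigma2 mfun
    field_simp
    ring
  have h3 : cl < cl' ∨ cu < cu' := by
    by_contra hcon
    push_neg at hcon
    exact hne (by rw [le_antisymm hcon.1 hcl', le_antisymm hcon.2 hcu'])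
  rw [key cl cu hcl hq, key cl' cu' (lt_of_lt_of_le hcl hcl') (lt_of_lt_of_le hq hcu')]
  exact ratio_mono (ρ1 * ρ2) _ _ _ cl cu cl' cu' (by positivity) hθpos hθ hqpos hspos hcl hq hcl' hcu' h3
end
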